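/- arXiv:1412.4912 — 5 statements merged into one kernel-verified Lean document; each statement's English description precedes it below -/
import Mathlib

section
/- In the oscillation model with parameters (f, ω, σ_η², σ_ε²) the autocovariance function Γ(ℓ) := E[Y_ℓ Y_0] − (E[Y_0])² satisfies, for every ℓ ∈ ℕ₊, Γ(ℓ) = 2 ∑_{k=1}^{∞} |c_k(f)|² cos(kℓω) e^{−ℓ k² σ_η²/2}; equivalently, (1/(2π)) ∫_0^{2π} ∫_ℝ f(x) f(x+y) g_ℓ(y) dy dx − c_0(f)² = 2 ∑_{k=1}^{∞} |c_k(f)|² cos(kℓω) e^{−ℓ k² σ_η²/2}, where g_ℓ is the density of N(ℓω, ℓσ_η²). Moreover Γ(0) = σ_ε² + 2 ∑_{k=1}^{∞} |c_k(f)|². -/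
open MeasureTheory ProbabilityTheory Real Set

noncomputable section

/-- The `k`-th Fourier coefficient `c_k(f) = (1/(2π)) ∫_{-π}^{π} f(x) e^{-ikx} dx`. -/
def fc (f : ℝ → ℝ) (k : ℤ) : ℂ :=
  (1 / (2 * (π : ℂ))) *
    ∫ x in (-π : ℝ)..π, (f x : ℂ) * Complex.exp (-Complex.I * (k : ℂ) * (x : ℂ))

/-- The class `F` of oscillation patterns: 2π-periodic functions with square-summable
Fourier coefficients which represent the function. -/
def IsOscPattern (f : ℝ → ℝ) : Prop :=
  (∀ x : ℝ, f (x + 2 * π) = f x) ∧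
  Summable (fun k : ℤ => ‖fc f k‖ ^ 2) ∧
  ∀ x : ℝ, (f x : ℂ) = ∑' k : ℤ, fc f k * Complex.exp (Complex.I * (k : ℂ) * (x : ℂ))

/-- norm of a coefficient times a character -/
lemma osc_norm_term (c : ℂ) (k : ℤ) (x : ℝ) :
    ‖c * Complex.exp (Complex.I * (k : ℂ) * (x : ℂ))‖ = ‖c‖ := by
  rw [norm_mul]
  have h : Complex.I * (k : ℂ) * (x : ℂ) = Complex.I * ((k * x : ℝ) : ℂ) := by push_cast; ring
  rw [h]
  simp [Complex.norm_exp]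

/-- The Fourier coefficients of an oscillation pattern are ℓ¹-summable. -/
lemma osc_l1 {f : ℝ → ℝ} (hf : IsOscPattern f) : Summable (fun k : ℤ => ‖fc f k‖) := by
  by_contra h
  have hf0 : ∀ x : ℝ, f x = 0 := by
    intro x
    have h3 := hf.2.2 x
    rw [tsum_eq_zero_of_not_summable] at h3
    · exact_mod_cast h3
    · intro hs
      exact h (by simpa only [osc_norm_term] using hs.norm)
  have hz : ∀ k : ℤ, fc f k = 0 := by intro k; simp [fc, hf0]
  exact h (by simp only [hz, norm_zero]; exact summable_zero)

/-- conjugation of an interval integral -/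
lemma intervalIntegral_conj {g : ℝ → ℂ} {a b : ℝ} :
    ∫ x in a..b, (starRingEnd ℂ) (g x) = (starRingEnd ℂ) (∫ x in a..b, g x) := by
  rw [intervalIntegral, intervalIntegral, integral_conj, integral_conj, map_sub]

/-- "characteristic function" of the Gaussian distribution -/
lemma gauss_char (μ : ℝ) (v : NNReal) (hv : 0 < (v : ℝ)) (t : ℝ) :
    ∫ y : ℝ, Complex.exp (Complex.I * (t : ℂ) * (y : ℂ)) * (gaussianPDFReal μ v y : ℂ)
      = Complex.exp (Complex.I * (t : ℂ) * (μ : ℂ) - (t : ℂ) ^ 2 * ((v : ℝ) : ℂ) / 2) := by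
  have hv' : ((v : ℝ) : ℂ) ≠ 0 := by exact_mod_cast hv.ne'
  have h2πv : (0:ℝ) ≤ 2 * π * v := by positivity
  have key : ∀ y : ℝ, Complex.exp (Complex.I * (t : ℂ) * (y : ℂ)) * (gaussianPDFReal μ v y : ℂ)
      = ((Real.sqrt (2 * π * v) : ℝ) : ℂ)⁻¹ *
        Complex.exp ((-(1/(2*((v:ℝ):ℂ)))) * (y:ℂ) ^ 2 + (Complex.I * (t:ℂ) + (μ:ℂ) / ((v:ℝ):ℂ)) * (y:ℂ)
          + (-((μ:ℂ)^2)/(2*((v:ℝ):ℂ)))) := by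
    intro y
    rw [gaussianPDFReal]
    push_cast
    rw [mul_comm (Complex.exp _) _, mul_assoc, ← Complex.exp_add]
    congr 2
    field_simp
    ring
  rw [funext key, MeasureTheory.integral_const_mul]
  rw [integral_cexp_quadratic (by simp [hv, one_div]) _ _]
  have h1 : ((π : ℂ) / -(-(1/(2*((v:ℝ):ℂ))))) = ((2 * π * v : ℝ) : ℂ) := by
    push_cast; field_simp
  rw [h1]
  have h2 : ((2 * π * v : ℝ) : ℂ) ^ (1/2 : ℂ) = ((Real.sqrt (2 * π * v) : ℝ) : ℂ) := by
    rw [Real.sqrt_eq_rpow, Complex.ofReal_cpow h2πv]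
    push_cast
    ring_nf
  rw [h2, ← mul_assoc]
  have h3 : (((Real.sqrt (2 * π * v) : ℝ) : ℂ))⁻¹ * ((Real.sqrt (2 * π * v) : ℝ) : ℂ) = 1 := by
    apply inv_mul_cancel₀
    simpa using (Real.sqrt_pos.mpr (by positivity : (0:ℝ) < 2*π*v)).ne'
  rw [h3, one_mul]
  congr 1
  have hI : Complex.I ^ 2 = -1 := Complex.I_sq
  field_simp
  ring_nf
  rw [hI]
  ring


/-- interchange of sum and integral for an `ℓ¹` series against a bounded continuous `f` -/
lemma osc_swap {f : ℝ → ℝ} (hfcont : Continuous f) (a b : ℝ) (hab : a ≤ b) (w : ℤ → ℂ)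
    (hw : Summable fun k => ‖w k‖) :
    HasSum (fun k : ℤ => w k * ∫ x in a..b, (f x:ℂ) * Complex.exp (Complex.I * (k:ℂ) * (x:ℂ)))
      (∫ x in a..b, (f x:ℂ) * ∑' k : ℤ, w k * Complex.exp (Complex.I * (k:ℂ) * (x:ℂ))) := by
  have hint : ∀ k : ℤ, Integrable
      (fun x => (f x:ℂ) * (w k * Complex.exp (Complex.I * (k:ℂ) * (x:ℂ))))
      (volume.restrict (Ioc a b)) := by
    intro k
    exact ((Complex.continuous_ofReal.comp hfcont).mul
      (continuous_const.mul (by fun_prop))).integrableOn_Ioc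
  have hsum : Summable fun k : ℤ => ∫ x in Ioc a b,
      ‖(f x:ℂ) * (w k * Complex.exp (Complex.I * (k:ℂ) * (x:ℂ)))‖ := by
    have : ∀ k : ℤ, (∫ x in Ioc a b,
        ‖(f x:ℂ) * (w k * Complex.exp (Complex.I * (k:ℂ) * (x:ℂ)))‖)
        = (∫ x in Ioc a b, ‖(f x:ℂ)‖) * ‖w k‖ := by
      intro k
      rw [← integral_mul_const]
      congr 1
      funext x
      rw [norm_mul, osc_norm_term]
    rw [funext this]
    exact hw.mul_left _
  have key := hasSum_integral_of_summable_integral_norm hint hsum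
  have h1 : ∀ k : ℤ, (∫ x in Ioc a b, (f x:ℂ) * (w k * Complex.exp (Complex.I * (k:ℂ) * (x:ℂ))))
      = w k * ∫ x in a..b, (f x:ℂ) * Complex.exp (Complex.I * (k:ℂ) * (x:ℂ)) := by
    intro k
    rw [intervalIntegral.integral_of_le hab, MeasureTheory.integral_Ioc_eq_integral_Ioo,
        ← MeasureTheory.integral_Ioc_eq_integral_Ioo, ← integral_const_mul]
    congr 1
    funext x
    ring
  have h2 : (∫ x in Ioc a b, ∑' k : ℤ, (f x:ℂ) * (w k * Complex.exp (Complex.I * (k:ℂ) * (x:ℂ))))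
      = ∫ x in a..b, (f x:ℂ) * ∑' k : ℤ, w k * Complex.exp (Complex.I * (k:ℂ) * (x:ℂ)) := by
    rw [intervalIntegral.integral_of_le hab]
    congr 1
    funext x
    rw [tsum_mul_left]
  rw [funext h1, h2] at key
  exact key

lemma osc_split_sum (u : ℤ → ℝ) (L : ℝ) (hL : HasSum u L) (heven : ∀ n : ℤ, u (-n) = u n) :
    ∑' k : ℕ, u ((k:ℤ)+1) = (L - u 0)/2 := by
  have h1 := hL.nat_add_neg
  have he : (fun n : ℕ => u (n:ℤ) + u (-(n:ℤ))) = fun n : ℕ => 2 * u (n:ℤ) := by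
    funext n; rw [heven]; ring
  rw [he] at h1
  have h3 := (hasSum_nat_add_iff' (f := fun n : ℕ => 2 * u (n:ℤ)) 1).mpr h1
  simp only [Finset.sum_range_one, Nat.cast_zero] at h3
  have h4 : HasSum (fun n : ℕ => 2 * u ((n:ℤ)+1)) (L - u 0) := by
    have harg : (fun n : ℕ => 2 * u ((n:ℤ)+1)) = fun n : ℕ => 2 * u ((n+1 : ℕ):ℤ) := by
      funext n; push_cast; ring_nf
    have hval : L - u 0 = L + u 0 - 2 * u 0 := by ring
    rw [harg, hval]; exact h3
  have h5 := h4.tsum_eq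
  rw [tsum_mul_left] at h5
  linarith

lemma cexp_ofReal_re (a b : ℝ) :
    (Complex.exp ((a:ℂ) + (b:ℂ)*Complex.I)).re = Real.exp a * Real.cos b := by
  rw [Complex.exp_re]
  congr 2 <;> simp

lemma cexp_ofReal_abs (a b : ℝ) :
    ‖Complex.exp ((a:ℂ) + (b:ℂ)*Complex.I)‖ = Real.exp a := by
  rw [Complex.norm_exp]
  congr 1
  simp


/-- Lemma (autocovariance of the oscillation model).  For `ℓ ≥ 1`,
`Γ(ℓ) = E[Y_ℓ Y_0] − E[Y_0]² = (1/(2π)) ∫_0^{2π} ∫_ℝ f(x) f(x+y) g_ℓ(y) dy dx − c_0(f)²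
      = 2 ∑_{k≥1} |c_k(f)|² cos(kℓω) e^{−ℓk²σ_η²/2}`,
where `g_ℓ` is the density of `N(ℓω, ℓσ_η²)` (the density of `φ_ℓ − φ_0`); moreover
`Γ(0) = E[Y_0²] − E[Y_0]² = σ_ε² + (1/(2π)) ∫ f(x)² dx − c_0(f)²
      = σ_ε² + 2 ∑_{k≥1} |c_k(f)|²`. -/
theorem autocovariance_formula
    (f : ℝ → ℝ) (hf : IsOscPattern f) (ω σε ση : ℝ)
    (hω : ω ∈ Ioo (0 : ℝ) π) (hσε : 0 < σε) (hση : 0 < ση) :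
    (∀ ℓ : ℕ, 1 ≤ ℓ →
      (1 / (2 * π)) *
          (∫ x in (0 : ℝ)..(2 * π),
            ∫ y : ℝ, f x * f (x + y) *
              gaussianPDFReal ((ℓ : ℝ) * ω) ((ℓ : NNReal) * (ση ^ 2).toNNReal) y) -
        ((1 / (2 * π)) * ∫ x in (-π : ℝ)..π, f x) ^ 2 =
      2 * ∑' k : ℕ, ‖fc f ((k : ℤ) + 1)‖ ^ 2 *
        Real.cos (((k : ℝ) + 1) * (ℓ : ℝ) * ω) *
        Real.exp (-(ℓ : ℝ) * ((k : ℝ) + 1) ^ 2 * ση ^ 2 / 2)) ∧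
    (σε ^ 2 + (1 / (2 * π)) * (∫ x in (-π : ℝ)..π, f x ^ 2) -
        ((1 / (2 * π)) * ∫ x in (-π : ℝ)..π, f x) ^ 2 =
      σε ^ 2 + 2 * ∑' k : ℕ, ‖fc f ((k : ℤ) + 1)‖ ^ 2) := by
  obtain ⟨hper, hsq, hrep⟩ := hf
  have hπ : (0:ℝ) < π := pi_pos
  have hππ : (-π:ℝ) ≤ π := by linarith
  have h2π0 : (2*(π:ℝ)) ≠ 0 := by positivity
  have h2πC : (2*(π:ℂ)) ≠ 0 := by
    simpa using Complex.ofReal_ne_zero.mpr h2π0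
  have habs : Summable (fun k : ℤ => ‖fc f k‖) := osc_l1 ⟨hper, hsq, hrep⟩
  set c : ℤ → ℂ := fc f with hc
  -- continuity of f
  have hterm_cont : ∀ k : ℤ, Continuous fun x : ℝ =>
      c k * Complex.exp (Complex.I * (k:ℂ) * (x:ℂ)) := fun k => by fun_prop
  have hFcont : Continuous (fun x : ℝ =>
      ∑' k : ℤ, c k * Complex.exp (Complex.I * (k:ℂ) * (x:ℂ))) :=
    continuous_tsum hterm_cont habs (fun k x => le_of_eq (osc_norm_term _ _ _))
  have hfeq : ∀ x:ℝ, (f x : ℂ) = ∑' k : ℤ, c k * Complex.exp (Complex.I * (k:ℂ) * (x:ℂ)) := hrep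
  have hfcont : Continuous f := by
    have hfre : f = fun x : ℝ => (∑' k : ℤ, c k * Complex.exp (Complex.I * (k:ℂ) * (x:ℂ))).re := by
      funext x; rw [← hfeq x, Complex.ofReal_re]
    rw [hfre]; exact Complex.continuous_re.comp hFcont
  -- coefficient extraction
  have hcoeff : ∀ k : ℤ, (∫ x in (-π:ℝ)..π, (f x:ℂ) * Complex.exp (Complex.I * (k:ℂ) * (x:ℂ)))
      = (2*(π:ℂ)) * c (-k) := by
    intro k
    have harg : ∀ x : ℝ, (f x:ℂ) * Complex.exp (-Complex.I * ((-k : ℤ):ℂ) * (x:ℂ))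
        = (f x:ℂ) * Complex.exp (Complex.I * (k:ℂ) * (x:ℂ)) := by
      intro x; congr 2; push_cast; ring
    rw [hc]
    show _ = (2*(π:ℂ)) * fc f (-k)
    rw [fc]
    simp only [harg]
    rw [← mul_assoc]
    rw [show (2*(π:ℂ)) * (1/(2*(π:ℂ))) = 1 by field_simp, one_mul]
  have hconj : ∀ k : ℤ, c (-k) = (starRingEnd ℂ) (c k) := by
    intro k
    rw [hc]
    show fc f (-k) = _
    rw [fc, fc, map_mul, ← intervalIntegral_conj]
    congr 1
    · rw [show (1:ℂ)/(2*(π:ℂ)) = ((1/(2*π):ℝ):ℂ) by push_cast; ring, Complex.conj_ofReal]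
    · apply intervalIntegral.integral_congr
      intro x _
      simp only [map_mul, Complex.conj_ofReal, ← Complex.exp_conj, map_neg, Complex.conj_I,
        map_intCast]
      congr 2
      push_cast
      ring
  have hnorm_even : ∀ k : ℤ, ‖c (-k)‖ = ‖c k‖ := fun k => by
    rw [hconj k]; exact RCLike.norm_conj _
  -- the zeroth coefficient
  have hc0 : c 0 = (((1 / (2 * π)) * ∫ x in (-π:ℝ)..π, f x : ℝ) : ℂ) := by
    rw [hc]
    show fc f 0 = _
    rw [fc]
    simp only [Int.cast_zero, mul_zero, zero_mul, Complex.exp_zero, mul_one]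
    rw [intervalIntegral.integral_ofReal]
    push_cast
    ring
  set r : ℝ := (1 / (2 * π)) * ∫ x in (-π:ℝ)..π, f x with hr
  have hc0sq : ‖c 0‖^2 = r^2 := by
    rw [hc0]
    rw [Complex.norm_real]
    exact sq_abs r
  -- Parseval
  have hpars : HasSum (fun k : ℤ => 2*π*‖c k‖^2) (∫ x in (-π:ℝ)..π, (f x)^2) := by
    have h := osc_swap hfcont (-π) π hππ c habs
    have h1 : (fun k : ℤ => c k * ∫ x in (-π:ℝ)..π,
        (f x:ℂ) * Complex.exp (Complex.I * (k:ℂ) * (x:ℂ)))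
        = fun k : ℤ => ((2*π*‖c k‖^2 : ℝ) : ℂ) := by
      funext k
      rw [hcoeff k, hconj k]
      rw [show c k * (2*(π:ℂ) * (starRingEnd ℂ) (c k))
        = 2*(π:ℂ) * (c k * (starRingEnd ℂ) (c k)) by ring]
      rw [Complex.mul_conj, Complex.normSq_eq_norm_sq]
      push_cast
      ring
    have h2 : (∫ x in (-π:ℝ)..π, (f x:ℂ) *
        ∑' k : ℤ, c k * Complex.exp (Complex.I * (k:ℂ) * (x:ℂ)))
        = (((∫ x in (-π:ℝ)..π, (f x)^2 : ℝ)) : ℂ) := by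
      rw [← intervalIntegral.integral_ofReal]
      apply intervalIntegral.integral_congr
      intro x _
      dsimp only
      rw [← hfeq x]
      push_cast
      ring
    rw [h1, h2] at h
    exact Complex.hasSum_ofReal.mp h
  have hP2 : (1/(2*π)) * (∫ x in (-π:ℝ)..π, (f x)^2) = ∑' k : ℤ, ‖c k‖^2 := by
    rw [← hpars.tsum_eq, tsum_mul_left]
    field_simp
  constructor
  · -- part 1
    intro ℓ hℓ
    have hℓ1 : (1:ℝ) ≤ (ℓ:ℝ) := by exact_mod_cast hℓ
    set μg : ℝ := (ℓ:ℝ) * ω with hμg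
    set v : NNReal := (ℓ : NNReal) * (ση^2).toNNReal with hv
    have hvr : ((v : NNReal) : ℝ) = (ℓ:ℝ) * ση^2 := by
      rw [hv, NNReal.coe_mul, NNReal.coe_natCast, Real.coe_toNNReal _ (sq_nonneg ση)]
    have hvpos : (0:ℝ) < (v:ℝ) := by
      rw [hvr]
      exact mul_pos (by linarith) (pow_pos hση 2)
    have hv0 : v ≠ 0 := by
      intro h
      rw [h] at hvpos
      simp at hvpos
    set g : ℝ → ℝ := gaussianPDFReal μg v with hgdef
    have hg_nonneg : ∀ y, 0 ≤ g y := gaussianPDFReal_nonneg μg v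
    have hg_int : Integrable g := integrable_gaussianPDFReal μg v
    have hg_one : (∫ y : ℝ, g y) = 1 := integral_gaussianPDFReal_eq_one μg hv0
    set χ : ℤ → ℂ := fun k =>
      Complex.exp (Complex.I * (k:ℂ) * (μg:ℂ) - (k:ℂ)^2 * ((v:ℝ):ℂ)/2) with hχdef
    have hχ_val : ∀ k : ℤ,
        (∫ y : ℝ, Complex.exp (Complex.I * (k:ℂ) * (y:ℂ)) * (g y : ℂ)) = χ k := by
      intro k
      have h := gauss_char μg v hvpos (k:ℝ)
      rw [hχdef]
      dsimp only
      rw [show (((k:ℝ):ℂ)) = ((k:ℤ):ℂ) by push_cast; ring] at h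
      exact h
    have hχ_arg : ∀ k : ℤ, Complex.I * (k:ℂ) * (μg:ℂ) - (k:ℂ)^2 * ((v:ℝ):ℂ)/2
        = ((-( (k:ℝ)^2 * (v:ℝ)/2 ) : ℝ) : ℂ) + (((k:ℝ) * μg : ℝ) : ℂ) * Complex.I := by
      intro k; push_cast; ring
    have hχ_re : ∀ k : ℤ,
        (χ k).re = Real.exp (-((k:ℝ)^2*(v:ℝ)/2)) * Real.cos ((k:ℝ)*μg) := by
      intro k
      rw [hχdef]
      dsimp only
      rw [hχ_arg k, cexp_ofReal_re]
    have hχ_le : ∀ k : ℤ, ‖χ k‖ ≤ 1 := by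
      intro k
      rw [hχdef]
      dsimp only
      rw [hχ_arg k, cexp_ofReal_abs, Real.exp_le_one_iff]
      have h1 : (0:ℝ) ≤ (k:ℝ)^2 * (v:ℝ)/2 := by positivity
      linarith
    -- the inner integral
    have hinner : ∀ x : ℝ, ((∫ y : ℝ, f x * f (x+y) * g y : ℝ) : ℂ)
        = (f x : ℂ) * ∑' k : ℤ, (c k * χ k) * Complex.exp (Complex.I * (k:ℂ) * (x:ℂ)) := by
      intro x
      have e1 : ((∫ y : ℝ, f x * f (x+y) * g y : ℝ) : ℂ)
          = ∫ y : ℝ, ∑' k : ℤ, (f x : ℂ) *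
              ((c k * Complex.exp (Complex.I * (k:ℂ) * ((x+y : ℝ):ℂ))) * (g y : ℂ)) := by
        have hoR : ((∫ y : ℝ, f x * f (x+y) * g y : ℝ) : ℂ)
            = ∫ y : ℝ, ((f x * f (x+y) * g y : ℝ) : ℂ) := (integral_ofReal (𝕜 := ℂ)).symm
        rw [hoR]
        congr 1
        funext y
        push_cast
        rw [hfeq (x+y)]
        rw [mul_assoc, ← tsum_mul_right, ← tsum_mul_left]
        push_cast
        rfl
      have hintk : ∀ k : ℤ, Integrable (fun y : ℝ => (f x : ℂ) *
          ((c k * Complex.exp (Complex.I * (k:ℂ) * ((x+y : ℝ):ℂ))) * (g y : ℂ))) := by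
        intro k
        have h1 : Integrable
            (fun y : ℝ => Complex.exp (Complex.I * (k:ℂ) * ((x+y:ℝ):ℂ)) * (g y : ℂ)) := by
          apply Integrable.bdd_mul (c := 1) (hg_int.ofReal)
          · apply Continuous.aestronglyMeasurable
            fun_prop
          · exact Filter.Eventually.of_forall (fun y => le_of_eq (by simpa using osc_norm_term 1 k (x+y)))
        have h2 := h1.const_mul ((f x : ℂ) * c k)
        have heq : (fun y : ℝ => (f x : ℂ) *
            ((c k * Complex.exp (Complex.I * (k:ℂ) * ((x+y : ℝ):ℂ))) * (g y : ℂ)))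
            = fun y : ℝ => ((f x:ℂ) * c k) *
              (Complex.exp (Complex.I * (k:ℂ) * ((x+y:ℝ):ℂ)) * (g y:ℂ)) := by
          funext y; ring
        rw [heq]
        exact h2
      have hsumk : Summable fun k : ℤ => ∫ y : ℝ, ‖(f x : ℂ) *
          ((c k * Complex.exp (Complex.I * (k:ℂ) * ((x+y : ℝ):ℂ))) * (g y : ℂ))‖ := by
        have hkval : ∀ k : ℤ, (∫ y : ℝ, ‖(f x : ℂ) *
            ((c k * Complex.exp (Complex.I * (k:ℂ) * ((x+y : ℝ):ℂ))) * (g y : ℂ))‖)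
            = ‖(f x:ℂ)‖ * (‖c k‖ * 1) := by
          intro k
          rw [show (fun y : ℝ => ‖(f x : ℂ) *
              ((c k * Complex.exp (Complex.I * (k:ℂ) * ((x+y : ℝ):ℂ))) * (g y : ℂ))‖)
              = fun y : ℝ => ‖(f x:ℂ)‖ * (‖c k‖ * g y) from funext fun y => by
            rw [norm_mul, norm_mul, osc_norm_term]
            congr 2
            simp [abs_of_nonneg (hg_nonneg y)]]
          rw [integral_const_mul, integral_const_mul, hg_one]
        rw [funext hkval]
        simp only [mul_one]
        exact habs.mul_left _
      have hswap := hasSum_integral_of_summable_integral_norm hintk hsumk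
      have e2 : ∀ k : ℤ, (∫ y : ℝ, (f x : ℂ) *
          ((c k * Complex.exp (Complex.I * (k:ℂ) * ((x+y : ℝ):ℂ))) * (g y : ℂ)))
          = (f x:ℂ) * ((c k * χ k) * Complex.exp (Complex.I * (k:ℂ) * (x:ℂ))) := by
        intro k
        have hsplitexp : ∀ y : ℝ, (f x : ℂ) *
            ((c k * Complex.exp (Complex.I * (k:ℂ) * ((x+y : ℝ):ℂ))) * (g y : ℂ))
            = ((f x:ℂ) * (c k * Complex.exp (Complex.I * (k:ℂ) * (x:ℂ)))) *
              (Complex.exp (Complex.I * (k:ℂ) * (y:ℂ)) * (g y : ℂ)) := by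
          intro y
          rw [show Complex.I * (k:ℂ) * ((x+y:ℝ):ℂ)
              = Complex.I * (k:ℂ) * (x:ℂ) + Complex.I * (k:ℂ) * (y:ℂ) by push_cast; ring,
            Complex.exp_add]
          ring
        rw [funext hsplitexp, MeasureTheory.integral_const_mul, hχ_val k]
        ring
      rw [e1, ← hswap.tsum_eq, tsum_congr e2, tsum_mul_left]
    -- the outer integral
    have hΦl1 : Summable fun k : ℤ => ‖c k * χ k‖ := by
      apply Summable.of_nonneg_of_le (fun k => norm_nonneg _) (fun k => ?_) habs
      rw [norm_mul]
      exact mul_le_of_le_one_right (norm_nonneg _) (hχ_le k)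
    have houter := osc_swap hfcont 0 (2*π) (by positivity) (fun k => c k * χ k) hΦl1
    have hshift : ∀ k : ℤ, (∫ x in (0:ℝ)..2*π,
        (f x:ℂ) * Complex.exp (Complex.I * (k:ℂ) * (x:ℂ))) = (2*(π:ℂ)) * c (-k) := by
      intro k
      have hp : Function.Periodic
          (fun x : ℝ => (f x:ℂ) * Complex.exp (Complex.I*(k:ℂ)*(x:ℂ))) (2*π) := by
        intro x
        have h1 : f (x + 2*π) = f x := hper x
        have h2 : Complex.exp (Complex.I*(k:ℂ)*((x + 2*π : ℝ):ℂ))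
            = Complex.exp (Complex.I*(k:ℂ)*(x:ℂ)) := by
          push_cast
          rw [mul_add, Complex.exp_add]
          rw [show Complex.I * (k:ℂ) * (2*(π:ℂ)) = (k:ℂ) * (2*(π:ℂ)*Complex.I) by ring,
            Complex.exp_int_mul_two_pi_mul_I, mul_one]
        dsimp only
        rw [h1]
        rw [show ((x + 2*π : ℝ):ℂ) = (x:ℂ) + 2*(π:ℂ) by push_cast; ring] at h2 ⊢
        rw [h2]
      have hshift1 := hp.intervalIntegral_add_eq 0 (-π)
      simp only [zero_add] at hshift1
      rw [show (-π + 2*π : ℝ) = π by ring] at hshift1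
      rw [hshift1, hcoeff k]
    have hterm : ∀ k : ℤ, (c k * χ k) * ∫ x in (0:ℝ)..2*π,
        (f x:ℂ) * Complex.exp (Complex.I * (k:ℂ) * (x:ℂ))
        = (((2*π*‖c k‖^2 : ℝ)):ℂ) * χ k := by
      intro k
      rw [hshift k, hconj k]
      rw [show c k * χ k * (2*(π:ℂ) * (starRingEnd ℂ) (c k))
          = (c k * (starRingEnd ℂ) (c k)) * χ k * (2*(π:ℂ)) by ring]
      rw [Complex.mul_conj, Complex.normSq_eq_norm_sq]
      push_cast
      ring
    have hval : (∫ x in (0:ℝ)..2*π, (f x:ℂ) *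
        ∑' k : ℤ, (c k * χ k) * Complex.exp (Complex.I * (k:ℂ) * (x:ℂ)))
        = ((∫ x in (0:ℝ)..2*π, ∫ y : ℝ, f x * f (x+y) * g y : ℝ) : ℂ) := by
      rw [← intervalIntegral.integral_ofReal]
      apply intervalIntegral.integral_congr
      intro x _
      dsimp only
      rw [hinner x]
    rw [funext hterm, hval] at houter
    have hre := Complex.hasSum_re houter
    simp only [Complex.re_ofReal_mul, Complex.ofReal_re] at hre
    have hU : HasSum (fun k : ℤ =>
        ‖c k‖^2 * (Real.exp (-((k:ℝ)^2*(v:ℝ)/2)) * Real.cos ((k:ℝ)*μg)))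
        ((∫ x in (0:ℝ)..2*π, ∫ y : ℝ, f x * f (x+y) * g y) / (2*π)) := by
      have h2 := hre.div_const (2*π)
      have heq2 : (fun k : ℤ => 2*π*‖c k‖^2 * (χ k).re / (2*π))
          = fun k : ℤ => ‖c k‖^2 * (Real.exp (-((k:ℝ)^2*(v:ℝ)/2)) * Real.cos ((k:ℝ)*μg)) := by
        funext k
        rw [hχ_re k]
        field_simp
      rwa [heq2] at h2
    have heven : ∀ n : ℤ, (fun k : ℤ =>
        ‖c k‖^2 * (Real.exp (-((k:ℝ)^2*(v:ℝ)/2)) * Real.cos ((k:ℝ)*μg))) (-n)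
        = (fun k : ℤ =>
        ‖c k‖^2 * (Real.exp (-((k:ℝ)^2*(v:ℝ)/2)) * Real.cos ((k:ℝ)*μg))) n := by
      intro n
      dsimp only
      rw [hnorm_even n]
      push_cast
      rw [show (-(n:ℝ))^2 = (n:ℝ)^2 by ring, show -(n:ℝ)*μg = -((n:ℝ)*μg) by ring,
        Real.cos_neg]
    have hfinal := osc_split_sum _ _ hU heven
    have hu0 : ‖c (0:ℤ)‖^2 * (Real.exp (-(((0:ℤ):ℝ)^2*(v:ℝ)/2)) * Real.cos (((0:ℤ):ℝ)*μg))
        = r^2 := by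
      rw [← hc0sq]
      norm_num
    rw [hu0] at hfinal
    have hterm_eq : ∀ k : ℕ, ‖c ((k:ℤ)+1)‖^2 * Real.cos (((k:ℝ)+1) * (ℓ:ℝ) * ω) *
        Real.exp (-(ℓ:ℝ) * ((k:ℝ)+1)^2 * ση^2 / 2)
        = (fun j : ℤ =>
          ‖c j‖^2 * (Real.exp (-((j:ℝ)^2*(v:ℝ)/2)) * Real.cos ((j:ℝ)*μg))) ((k:ℤ)+1) := by
      intro k
      dsimp only
      rw [hvr, hμg]
      push_cast
      rw [show -(((k:ℝ)+1)^2*((ℓ:ℝ)*ση^2)/2) = -(ℓ:ℝ) * ((k:ℝ)+1)^2 * ση^2 / 2 by ring,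
        show ((k:ℝ)+1)*((ℓ:ℝ)*ω) = ((k:ℝ)+1) * (ℓ:ℝ) * ω by ring]
      ring
    rw [tsum_congr hterm_eq, hfinal]
    ring
  · -- part 2
    have hsplit := osc_split_sum (fun k : ℤ => ‖c k‖^2) (∑' k : ℤ, ‖c k‖^2) hsq.hasSum
      (fun n => by rw [hnorm_even n])
    have h20 : (2:ℝ) * ∑' k : ℕ, ‖c ((k:ℤ)+1)‖^2 = (∑' k : ℤ, ‖c k‖^2) - r^2 := by
      rw [hsplit]
      rw [hc0sq]
      ring
    rw [hP2]
    linarith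
end
end

section
/- Let {|c_k|²}_{k≥1} and {|c⋆_k|²}_{k≥1} be square-summable nonnegative sequences, not identically zero, with first nonzero indices κ₁ and κ₁⋆ respectively, and let ω, ω⋆ ∈ (0,π), σ_η, σ_{η⋆} > 0. If ∑_{k=1}^{∞} |c_k|² cos(kℓω) e^{−ℓk²σ_η²/2} = ∑_{k=1}^{∞} |c⋆_k|² cos(kℓω⋆) e^{−ℓk²σ_{η⋆}²/2} for all ℓ ∈ ℕ₊, then κ₁² σ_η² = (κ₁⋆)² σ_{η⋆}² and |c_{κ₁}| = |c⋆_{κ₁⋆}|. -/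
open Real Set

noncomputable section

private lemma aux_cos_big (θ : ℝ) (N : ℕ) (hN : 1 ≤ N) :
    ∃ m : ℕ, N ≤ m ∧ 1 / 2 ≤ |Real.cos ((m : ℝ) * θ)| := by
  by_cases h : 1 / 2 ≤ |Real.cos ((N : ℝ) * θ)|
  · exact ⟨N, le_rfl, h⟩
  · refine ⟨2 * N, by omega, ?_⟩
    push_neg at h
    have h2 : ((2 * N : ℕ) : ℝ) * θ = 2 * ((N : ℝ) * θ) := by push_cast; ring
    rw [h2, Real.cos_two_mul]
    rw [abs_lt] at h
    rw [le_abs]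
    right
    nlinarith [h.1, h.2]

private lemma aux_shift (c : ℕ → ℂ) (hc : Summable fun k : ℕ => ‖c k‖ ^ 2) :
    Summable fun k : ℕ => ‖c (k + 1)‖ ^ 2 := by
  have : Function.Injective fun k : ℕ => k + 1 := fun a b h => by simpa using h
  exact hc.comp_injective this

private lemma aux_summable (c : ℕ → ℂ) (hc : Summable fun k : ℕ => ‖c k‖ ^ 2)
    (ω σ : ℝ) (ℓ : ℕ) :
    Summable fun k : ℕ => ‖c (k + 1)‖ ^ 2 * Real.cos (((k : ℝ) + 1) * (ℓ : ℝ) * ω) *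
      Real.exp (-(ℓ : ℝ) * ((k : ℝ) + 1) ^ 2 * σ ^ 2 / 2) := by
  apply Summable.of_norm_bounded (aux_shift c hc)
  intro k
  have h1 : |Real.cos (((k : ℝ) + 1) * (ℓ : ℝ) * ω)| ≤ 1 := Real.abs_cos_le_one _
  have h2 : Real.exp (-(ℓ : ℝ) * ((k : ℝ) + 1) ^ 2 * σ ^ 2 / 2) ≤ 1 := by
    rw [Real.exp_le_one_iff]
    have : (0 : ℝ) ≤ (ℓ : ℝ) * ((k : ℝ) + 1) ^ 2 * σ ^ 2 / 2 := by positivity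
    linarith
  have h4 : (0 : ℝ) ≤ ‖c (k + 1)‖ ^ 2 := by positivity
  rw [Real.norm_eq_abs, abs_mul, abs_mul, abs_of_nonneg h4, Real.abs_exp]
  calc ‖c (k + 1)‖ ^ 2 * |Real.cos (((k : ℝ) + 1) * (ℓ : ℝ) * ω)| *
        Real.exp (-(ℓ : ℝ) * ((k : ℝ) + 1) ^ 2 * σ ^ 2 / 2)
      ≤ ‖c (k + 1)‖ ^ 2 * 1 * 1 := by gcongr
    _ = ‖c (k + 1)‖ ^ 2 := by ring

private lemma aux_exp_mono {x y : ℝ} (h : x ≤ y) : Real.exp x ≤ Real.exp y :=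
  Real.exp_le_exp.mpr h

set_option maxHeartbeats 1000000 in
/-- crude bound: the whole series is at most `S * exp(-ℓ κ² σ² / 2)`. -/
private lemma aux_crude (c : ℕ → ℂ) (hc : Summable fun k : ℕ => ‖c k‖ ^ 2)
    (ω σ : ℝ) (κ : ℕ) (hκ : 1 ≤ κ)
    (hmin : ∀ k : ℕ, 1 ≤ k → k < κ → c k = 0) (ℓ : ℕ) :
    |∑' k : ℕ, ‖c (k + 1)‖ ^ 2 * Real.cos (((k : ℝ) + 1) * (ℓ : ℝ) * ω) *
        Real.exp (-(ℓ : ℝ) * ((k : ℝ) + 1) ^ 2 * σ ^ 2 / 2)|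
      ≤ (∑' k : ℕ, ‖c (k + 1)‖ ^ 2) * Real.exp (-(ℓ : ℝ) * (κ : ℝ) ^ 2 * σ ^ 2 / 2) := by
  set E := Real.exp (-(ℓ : ℝ) * (κ : ℝ) ^ 2 * σ ^ 2 / 2) with hE
  set f := fun k : ℕ => ‖c (k + 1)‖ ^ 2 * Real.cos (((k : ℝ) + 1) * (ℓ : ℝ) * ω) *
      Real.exp (-(ℓ : ℝ) * ((k : ℝ) + 1) ^ 2 * σ ^ 2 / 2) with hfdef
  have hE0 : 0 < E := by rw [hE]; exact Real.exp_pos _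
  have hf : Summable f := aux_summable c hc ω σ ℓ
  have hgs : Summable fun k : ℕ => ‖c (k + 1)‖ ^ 2 * E := (aux_shift c hc).mul_right E
  have hb : ∀ k : ℕ, |f k| ≤ ‖c (k + 1)‖ ^ 2 * E := by
    intro k
    by_cases hk : k + 1 < κ
    · simp only [hfdef]
      rw [hmin (k + 1) (by omega) hk]
      simp only [norm_zero]
      rw [zero_pow (by norm_num), zero_mul, zero_mul, zero_mul, abs_zero]
    · push_neg at hk
      have hk' : (κ : ℝ) ≤ (k : ℝ) + 1 := by exact_mod_cast hk
      have h4 : (0 : ℝ) ≤ ‖c (k + 1)‖ ^ 2 := by positivity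
      have hexp : Real.exp (-(ℓ : ℝ) * ((k : ℝ) + 1) ^ 2 * σ ^ 2 / 2) ≤ E := by
        rw [hE]
        apply aux_exp_mono
        have hκ0 : (0 : ℝ) ≤ (κ : ℝ) := by positivity
        have hl0 : (0 : ℝ) ≤ (ℓ : ℝ) := by positivity
        have hsq : (κ : ℝ) ^ 2 ≤ ((k : ℝ) + 1) ^ 2 := by nlinarith
        have hmm := mul_le_mul_of_nonneg_left hsq (mul_nonneg hl0 (sq_nonneg σ))
        nlinarith [hmm]
      have h1 : |Real.cos (((k : ℝ) + 1) * (ℓ : ℝ) * ω)| ≤ 1 := Real.abs_cos_le_one _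
      simp only [hfdef]
      rw [abs_mul, abs_mul, abs_of_nonneg h4, Real.abs_exp]
      calc ‖c (k + 1)‖ ^ 2 * |Real.cos (((k : ℝ) + 1) * (ℓ : ℝ) * ω)| *
            Real.exp (-(ℓ : ℝ) * ((k : ℝ) + 1) ^ 2 * σ ^ 2 / 2)
          ≤ ‖c (k + 1)‖ ^ 2 * 1 * E := by gcongr
        _ = ‖c (k + 1)‖ ^ 2 * E := by ring
  calc |∑' k : ℕ, f k|
      ≤ ∑' k : ℕ, |f k| := by
        simpa [Real.norm_eq_abs] using norm_tsum_le_tsum_norm (f := f)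
          (by simpa [Real.norm_eq_abs] using hf.abs)
    _ ≤ ∑' k : ℕ, ‖c (k + 1)‖ ^ 2 * E := Summable.tsum_le_tsum hb hf.abs hgs
    _ = (∑' k : ℕ, ‖c (k + 1)‖ ^ 2) * E := tsum_mul_right

set_option maxHeartbeats 1000000 in
/-- the series minus its leading term is at most `S * exp(-ℓ (κ+1)² σ² / 2)`. -/
private lemma aux_diff (c : ℕ → ℂ) (hc : Summable fun k : ℕ => ‖c k‖ ^ 2)
    (ω σ : ℝ) (κ : ℕ) (hκ : 1 ≤ κ)
    (hmin : ∀ k : ℕ, 1 ≤ k → k < κ → c k = 0) (ℓ : ℕ) :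
    |(∑' k : ℕ, ‖c (k + 1)‖ ^ 2 * Real.cos (((k : ℝ) + 1) * (ℓ : ℝ) * ω) *
        Real.exp (-(ℓ : ℝ) * ((k : ℝ) + 1) ^ 2 * σ ^ 2 / 2)) -
      ‖c κ‖ ^ 2 * Real.cos ((κ : ℝ) * (ℓ : ℝ) * ω) *
        Real.exp (-(ℓ : ℝ) * (κ : ℝ) ^ 2 * σ ^ 2 / 2)|
      ≤ (∑' k : ℕ, ‖c (k + 1)‖ ^ 2) * Real.exp (-(ℓ : ℝ) * ((κ : ℝ) + 1) ^ 2 * σ ^ 2 / 2) := by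
  classical
  set E := Real.exp (-(ℓ : ℝ) * ((κ : ℝ) + 1) ^ 2 * σ ^ 2 / 2) with hE
  set f := fun k : ℕ => ‖c (k + 1)‖ ^ 2 * Real.cos (((k : ℝ) + 1) * (ℓ : ℝ) * ω) *
      Real.exp (-(ℓ : ℝ) * ((k : ℝ) + 1) ^ 2 * σ ^ 2 / 2) with hfdef
  have hE0 : 0 < E := by rw [hE]; exact Real.exp_pos _
  have hf : Summable f := aux_summable c hc ω σ ℓ
  have hκ1 : κ - 1 + 1 = κ := by omega
  have hcast : ((κ - 1 : ℕ) : ℝ) + 1 = (κ : ℝ) := by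
    rw [Nat.cast_sub hκ]; push_cast; ring
  have hmain : f (κ - 1) = ‖c κ‖ ^ 2 * Real.cos ((κ : ℝ) * (ℓ : ℝ) * ω) *
      Real.exp (-(ℓ : ℝ) * (κ : ℝ) ^ 2 * σ ^ 2 / 2) := by
    simp only [hfdef]
    rw [hκ1, hcast]
  have key := Summable.tsum_eq_add_tsum_ite hf (κ - 1)
  have hdiff : (∑' k : ℕ, f k) - f (κ - 1) = ∑' k : ℕ, if k = κ - 1 then 0 else f k := by
    rw [key]; ring
  have hgs : Summable fun k : ℕ => ‖c (k + 1)‖ ^ 2 * E := (aux_shift c hc).mul_right E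
  have hites : Summable fun k : ℕ => if k = κ - 1 then (0 : ℝ) else f k := by
    have h2 : Summable fun k : ℕ => if k = κ - 1 then f k else 0 := by
      apply summable_of_ne_finset_zero (s := {κ - 1})
      intro b hb
      simp only [Finset.mem_singleton] at hb
      simp [hb]
    refine (hf.sub h2).congr fun k => ?_
    by_cases hk : k = κ - 1 <;> simp [hk]
  have hb : ∀ k : ℕ, |if k = κ - 1 then (0 : ℝ) else f k| ≤ ‖c (k + 1)‖ ^ 2 * E := by
    intro k
    by_cases hk : k = κ - 1
    · rw [if_pos hk, abs_zero]
      exact mul_nonneg (by positivity) hE0.le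
    · rw [if_neg hk]
      by_cases hk2 : k + 1 < κ
      · simp only [hfdef]
        rw [hmin (k + 1) (by omega) hk2]
        simp only [norm_zero]
        rw [zero_pow (by norm_num), zero_mul, zero_mul, zero_mul, abs_zero]
      · push_neg at hk2
        have hk3 : κ + 1 ≤ k + 1 := by omega
        have hk' : (κ : ℝ) + 1 ≤ (k : ℝ) + 1 := by exact_mod_cast hk3
        have h4 : (0 : ℝ) ≤ ‖c (k + 1)‖ ^ 2 := by positivity
        have hexp : Real.exp (-(ℓ : ℝ) * ((k : ℝ) + 1) ^ 2 * σ ^ 2 / 2) ≤ E := by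
          rw [hE]
          apply aux_exp_mono
          have hκ0 : (0 : ℝ) ≤ (κ : ℝ) + 1 := by positivity
          have hl0 : (0 : ℝ) ≤ (ℓ : ℝ) := by positivity
          have hsq : ((κ : ℝ) + 1) ^ 2 ≤ ((k : ℝ) + 1) ^ 2 := by nlinarith
          have hmm := mul_le_mul_of_nonneg_left hsq (mul_nonneg hl0 (sq_nonneg σ))
          nlinarith [hmm]
        have h1 : |Real.cos (((k : ℝ) + 1) * (ℓ : ℝ) * ω)| ≤ 1 := Real.abs_cos_le_one _
        simp only [hfdef]
        rw [abs_mul, abs_mul, abs_of_nonneg h4, Real.abs_exp]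
        calc ‖c (k + 1)‖ ^ 2 * |Real.cos (((k : ℝ) + 1) * (ℓ : ℝ) * ω)| *
              Real.exp (-(ℓ : ℝ) * ((k : ℝ) + 1) ^ 2 * σ ^ 2 / 2)
            ≤ ‖c (k + 1)‖ ^ 2 * 1 * E := by gcongr
          _ = ‖c (k + 1)‖ ^ 2 * E := by ring
  rw [← hmain, hdiff]
  calc |∑' k : ℕ, if k = κ - 1 then (0 : ℝ) else f k|
      ≤ ∑' k : ℕ, |if k = κ - 1 then (0 : ℝ) else f k| := by
        simpa [Real.norm_eq_abs] using norm_tsum_le_tsum_norm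
          (f := fun k : ℕ => if k = κ - 1 then (0 : ℝ) else f k)
          (by simpa [Real.norm_eq_abs] using hites.abs)
    _ ≤ ∑' k : ℕ, ‖c (k + 1)‖ ^ 2 * E := Summable.tsum_le_tsum hb hites.abs hgs
    _ = (∑' k : ℕ, ‖c (k + 1)‖ ^ 2) * E := tsum_mul_right

private lemma aux_exp_small (ε K δ : ℝ) (hε : 0 < ε) (hδ : 0 < δ) :
    ∃ T : ℕ, 1 ≤ T ∧ ∀ j : ℕ, T ≤ j → K * Real.exp (-(j : ℝ) * ε) < δ := by
  set M := |K| + 1 with hM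
  have hM0 : 0 < M := by positivity
  obtain ⟨n, hn⟩ := exists_nat_gt (max 1 (-Real.log (δ / M) / ε))
  refine ⟨n, ?_, ?_⟩
  · have h1 : (1 : ℝ) < n := lt_of_le_of_lt (le_max_left _ _) hn
    exact_mod_cast h1.le
  · intro j hj
    have hj' : (n : ℝ) ≤ j := by exact_mod_cast hj
    have h1 : -Real.log (δ / M) / ε < (j : ℝ) :=
      lt_of_le_of_lt (le_max_right _ _) (lt_of_lt_of_le hn hj')
    have h2 : -(j : ℝ) * ε < Real.log (δ / M) := by
      rw [div_lt_iff₀ hε] at h1; linarith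
    have h3 : Real.exp (-(j : ℝ) * ε) < δ / M :=
      (Real.lt_log_iff_exp_lt (by positivity)).mp h2
    have h4 : K * Real.exp (-(j : ℝ) * ε) ≤ M * Real.exp (-(j : ℝ) * ε) := by
      have he := Real.exp_pos (-(j : ℝ) * ε)
      nlinarith [le_abs_self K]
    calc K * Real.exp (-(j : ℝ) * ε) ≤ M * Real.exp (-(j : ℝ) * ε) := h4
      _ < M * (δ / M) := by exact (mul_lt_mul_iff_right₀ hM0).mpr h3
      _ = δ := by field_simp

private lemma aux_cos_rec (x : ℝ) (n : ℕ) :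
    Real.cos (((n : ℝ) + 2) * x) =
      2 * Real.cos x * Real.cos (((n : ℝ) + 1) * x) - Real.cos ((n : ℝ) * x) := by
  have h1 : ((n : ℝ) + 2) * x = (((n : ℝ) + 1) * x) + x := by ring
  have h2 : (n : ℝ) * x = (((n : ℝ) + 1) * x) - x := by ring
  rw [h1, h2, Real.cos_add, Real.cos_sub]; ring

private lemma aux_cos_eq (θ φ : ℝ) (h : Real.cos θ = Real.cos φ) :
    ∀ n : ℕ, Real.cos ((n : ℝ) * θ) = Real.cos ((n : ℝ) * φ) := by
  intro n
  induction n using Nat.strong_induction_on with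
  | _ n ih =>
    match n with
    | 0 => simp
    | 1 => simpa using h
    | (m + 2) =>
      have c1 := ih (m + 1) (by omega)
      have c0 := ih m (by omega)
      push_cast at c1 c0 ⊢
      rw [aux_cos_rec θ m, aux_cos_rec φ m, h, c1, c0]

set_option maxHeartbeats 1000000 in
/-- Rate comparison: the star rate is at most the unstarred rate (given `c κ₁ ≠ 0`). -/
private lemma aux_rate_le
    (c cstar : ℕ → ℂ)
    (hc : Summable fun k : ℕ => ‖c k‖ ^ 2) (hcstar : Summable fun k : ℕ => ‖cstar k‖ ^ 2)
    (ω ωstar : ℝ) (ση σηstar : ℝ)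
    (κ₁ κ₁star : ℕ)
    (hκ₁pos : 1 ≤ κ₁) (hκ₁ne : c κ₁ ≠ 0) (hκ₁min : ∀ k : ℕ, 1 ≤ k → k < κ₁ → c k = 0)
    (hκ₁starpos : 1 ≤ κ₁star)
    (hκ₁starmin : ∀ k : ℕ, 1 ≤ k → k < κ₁star → cstar k = 0)
    (hση : 0 < ση)
    (heq : ∀ ℓ : ℕ, 1 ≤ ℓ →
      (∑' k : ℕ, ‖c (k + 1)‖ ^ 2 * Real.cos (((k : ℝ) + 1) * (ℓ : ℝ) * ω) *
          Real.exp (-(ℓ : ℝ) * ((k : ℝ) + 1) ^ 2 * ση ^ 2 / 2)) =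
      ∑' k : ℕ, ‖cstar (k + 1)‖ ^ 2 * Real.cos (((k : ℝ) + 1) * (ℓ : ℝ) * ωstar) *
          Real.exp (-(ℓ : ℝ) * ((k : ℝ) + 1) ^ 2 * σηstar ^ 2 / 2)) :
    (κ₁star : ℝ) ^ 2 * σηstar ^ 2 ≤ (κ₁ : ℝ) ^ 2 * ση ^ 2 := by
  by_contra hlt
  push_neg at hlt
  set A : ℝ := ‖c κ₁‖ ^ 2 with hA
  have hA0 : 0 < A := by
    have : 0 < ‖c κ₁‖ := norm_pos_iff.mpr hκ₁ne
    positivity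
  set S : ℝ := ∑' k : ℕ, ‖c (k + 1)‖ ^ 2 with hS
  set Sstar : ℝ := ∑' k : ℕ, ‖cstar (k + 1)‖ ^ 2 with hSstar
  have hS0 : 0 ≤ S := tsum_nonneg fun k => by positivity
  have hSstar0 : 0 ≤ Sstar := tsum_nonneg fun k => by positivity
  have hκ1R : (1 : ℝ) ≤ (κ₁ : ℝ) := by exact_mod_cast hκ₁pos
  set ε : ℝ := min ((((κ₁ : ℝ) + 1) ^ 2 * ση ^ 2 - (κ₁ : ℝ) ^ 2 * ση ^ 2) / 2)
      (((κ₁star : ℝ) ^ 2 * σηstar ^ 2 - (κ₁ : ℝ) ^ 2 * ση ^ 2) / 2) with hε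
  have hε0 : 0 < ε := lt_min (by nlinarith) (by nlinarith)
  have hεle1 : ε ≤ (((κ₁ : ℝ) + 1) ^ 2 * ση ^ 2 - (κ₁ : ℝ) ^ 2 * ση ^ 2) / 2 := min_le_left _ _
  have hεle2 : ε ≤ ((κ₁star : ℝ) ^ 2 * σηstar ^ 2 - (κ₁ : ℝ) ^ 2 * ση ^ 2) / 2 := min_le_right _ _
  have hbound : ∀ ℓ : ℕ, 1 ≤ ℓ →
      A * |Real.cos ((ℓ : ℝ) * ((κ₁ : ℝ) * ω))| ≤ (S + Sstar) * Real.exp (-(ℓ : ℝ) * ε) := by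
    intro ℓ hℓ
    have hℓ1 : (1 : ℝ) ≤ (ℓ : ℝ) := by exact_mod_cast hℓ
    set Ea := Real.exp (-(ℓ : ℝ) * (κ₁ : ℝ) ^ 2 * ση ^ 2 / 2) with hEa
    have hEa0 : 0 < Ea := by rw [hEa]; exact Real.exp_pos _
    have hd1 := aux_diff c hc ω ση κ₁ hκ₁pos hκ₁min ℓ
    have hcr := aux_crude cstar hcstar ωstar σηstar κ₁star hκ₁starpos hκ₁starmin ℓ
    set t1 := ∑' k : ℕ, ‖c (k + 1)‖ ^ 2 * Real.cos (((k : ℝ) + 1) * (ℓ : ℝ) * ω) *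
        Real.exp (-(ℓ : ℝ) * ((k : ℝ) + 1) ^ 2 * ση ^ 2 / 2) with ht1
    set t2 := ∑' k : ℕ, ‖cstar (k + 1)‖ ^ 2 * Real.cos (((k : ℝ) + 1) * (ℓ : ℝ) * ωstar) *
        Real.exp (-(ℓ : ℝ) * ((k : ℝ) + 1) ^ 2 * σηstar ^ 2 / 2) with ht2
    have ht12 : t1 = t2 := heq ℓ hℓ
    set M1 := A * Real.cos ((κ₁ : ℝ) * (ℓ : ℝ) * ω) * Ea with hM1
    have h5 : |M1| ≤ |t1| + |t1 - M1| := by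
      have h := abs_sub t1 (t1 - M1)
      have h' : t1 - (t1 - M1) = M1 := by ring
      rwa [h'] at h
    have step1 : |M1| ≤ Sstar * Real.exp (-(ℓ : ℝ) * (κ₁star : ℝ) ^ 2 * σηstar ^ 2 / 2) +
        S * Real.exp (-(ℓ : ℝ) * ((κ₁ : ℝ) + 1) ^ 2 * ση ^ 2 / 2) := by
      calc |M1| ≤ |t1| + |t1 - M1| := h5
        _ ≤ Sstar * Real.exp (-(ℓ : ℝ) * (κ₁star : ℝ) ^ 2 * σηstar ^ 2 / 2) +
            S * Real.exp (-(ℓ : ℝ) * ((κ₁ : ℝ) + 1) ^ 2 * ση ^ 2 / 2) := by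
            exact add_le_add (by rw [ht12]; exact hcr) hd1
    have hexp1 : Real.exp (-(ℓ : ℝ) * (κ₁star : ℝ) ^ 2 * σηstar ^ 2 / 2) ≤
        Real.exp (-(ℓ : ℝ) * ε) * Ea := by
      rw [hEa, ← Real.exp_add]
      apply aux_exp_mono
      have hmm := mul_le_mul_of_nonneg_left hεle2 (le_trans zero_le_one hℓ1)
      linarith [hmm]
    have hexp2 : Real.exp (-(ℓ : ℝ) * ((κ₁ : ℝ) + 1) ^ 2 * ση ^ 2 / 2) ≤
        Real.exp (-(ℓ : ℝ) * ε) * Ea := by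
      rw [hEa, ← Real.exp_add]
      apply aux_exp_mono
      have hmm := mul_le_mul_of_nonneg_left hεle1 (le_trans zero_le_one hℓ1)
      linarith [hmm]
    have hmabs : |M1| = A * |Real.cos ((κ₁ : ℝ) * (ℓ : ℝ) * ω)| * Ea := by
      rw [hM1, abs_mul, abs_mul, abs_of_nonneg hA0.le, abs_of_pos hEa0]
    have step2 : A * |Real.cos ((κ₁ : ℝ) * (ℓ : ℝ) * ω)| * Ea ≤
        ((S + Sstar) * Real.exp (-(ℓ : ℝ) * ε)) * Ea := by
      rw [← hmabs]
      calc |M1| ≤ Sstar * Real.exp (-(ℓ : ℝ) * (κ₁star : ℝ) ^ 2 * σηstar ^ 2 / 2) +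
            S * Real.exp (-(ℓ : ℝ) * ((κ₁ : ℝ) + 1) ^ 2 * ση ^ 2 / 2) := step1
        _ ≤ Sstar * (Real.exp (-(ℓ : ℝ) * ε) * Ea) + S * (Real.exp (-(ℓ : ℝ) * ε) * Ea) := by
            gcongr
        _ = ((S + Sstar) * Real.exp (-(ℓ : ℝ) * ε)) * Ea := by ring
    have harg : (ℓ : ℝ) * ((κ₁ : ℝ) * ω) = (κ₁ : ℝ) * (ℓ : ℝ) * ω := by ring
    rw [harg]
    exact le_of_mul_le_mul_right step2 hEa0
  obtain ⟨T, hT1, hTs⟩ := aux_exp_small ε (S + Sstar) (A / 2) hε0 (by linarith)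
  obtain ⟨m, hmT, hmcos⟩ := aux_cos_big ((κ₁ : ℝ) * ω) T hT1
  have h1 := hbound m (le_trans hT1 hmT)
  have h2 := hTs m hmT
  have h3 : A * (1 / 2) ≤ A * |Real.cos ((m : ℝ) * ((κ₁ : ℝ) * ω))| :=
    mul_le_mul_of_nonneg_left hmcos hA0.le
  linarith

set_option maxHeartbeats 1000000 in
/-- First identification step: if two weighted cosine series (the autocovariance
expansions) coincide for all lags `ℓ ≥ 1`, then `κ₁² σ_η² = (κ₁⋆)² σ_{η⋆}²` and
`|c_{κ₁}| = |c⋆_{κ₁⋆}|`, where `κ₁`, `κ₁⋆` are the first indices `k ≥ 1` with nonzero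
coefficient. -/
theorem first_nonzero_coefficient_identification
    (c cstar : ℕ → ℂ)
    (hc : Summable fun k : ℕ => ‖c k‖ ^ 2) (hcstar : Summable fun k : ℕ => ‖cstar k‖ ^ 2)
    (ω ωstar : ℝ) (hω : ω ∈ Ioo (0 : ℝ) π) (hωstar : ωstar ∈ Ioo (0 : ℝ) π)
    (ση σηstar : ℝ) (hση : 0 < ση) (hσηstar : 0 < σηstar)
    (κ₁ κ₁star : ℕ)
    (hκ₁pos : 1 ≤ κ₁) (hκ₁ne : c κ₁ ≠ 0) (hκ₁min : ∀ k : ℕ, 1 ≤ k → k < κ₁ → c k = 0)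
    (hκ₁starpos : 1 ≤ κ₁star) (hκ₁starne : cstar κ₁star ≠ 0)
    (hκ₁starmin : ∀ k : ℕ, 1 ≤ k → k < κ₁star → cstar k = 0)
    (heq : ∀ ℓ : ℕ, 1 ≤ ℓ →
      (∑' k : ℕ, ‖c (k + 1)‖ ^ 2 * Real.cos (((k : ℝ) + 1) * (ℓ : ℝ) * ω) *
          Real.exp (-(ℓ : ℝ) * ((k : ℝ) + 1) ^ 2 * ση ^ 2 / 2)) =
      ∑' k : ℕ, ‖cstar (k + 1)‖ ^ 2 * Real.cos (((k : ℝ) + 1) * (ℓ : ℝ) * ωstar) *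
          Real.exp (-(ℓ : ℝ) * ((k : ℝ) + 1) ^ 2 * σηstar ^ 2 / 2)) :
    (κ₁ : ℝ) ^ 2 * ση ^ 2 = (κ₁star : ℝ) ^ 2 * σηstar ^ 2 ∧
    ‖c κ₁‖ = ‖cstar κ₁star‖ := by
  have hle1 := aux_rate_le c cstar hc hcstar ω ωstar ση σηstar κ₁ κ₁star hκ₁pos hκ₁ne hκ₁min
    hκ₁starpos hκ₁starmin hση heq
  have hle2 := aux_rate_le cstar c hcstar hc ωstar ω σηstar ση κ₁star κ₁ hκ₁starpos hκ₁starne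
    hκ₁starmin hκ₁pos hκ₁min hσηstar (fun ℓ hℓ => (heq ℓ hℓ).symm)
  have hrate : (κ₁ : ℝ) ^ 2 * ση ^ 2 = (κ₁star : ℝ) ^ 2 * σηstar ^ 2 := le_antisymm hle2 hle1
  refine ⟨hrate, ?_⟩
  set A : ℝ := ‖c κ₁‖ ^ 2 with hA
  set B : ℝ := ‖cstar κ₁star‖ ^ 2 with hB
  have hA0 : 0 < A := by
    have : 0 < ‖c κ₁‖ := norm_pos_iff.mpr hκ₁ne
    positivity
  have hB0 : 0 < B := by
    have : 0 < ‖cstar κ₁star‖ := norm_pos_iff.mpr hκ₁starne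
    positivity
  set S : ℝ := ∑' k : ℕ, ‖c (k + 1)‖ ^ 2 with hS
  set Sstar : ℝ := ∑' k : ℕ, ‖cstar (k + 1)‖ ^ 2 with hSstar
  have hS0 : 0 ≤ S := tsum_nonneg fun k => by positivity
  have hSstar0 : 0 ≤ Sstar := tsum_nonneg fun k => by positivity
  set θ : ℝ := (κ₁ : ℝ) * ω with hθ
  set φ : ℝ := (κ₁star : ℝ) * ωstar with hφ
  have hκ1R : (1 : ℝ) ≤ (κ₁ : ℝ) := by exact_mod_cast hκ₁pos
  have hκ1starR : (1 : ℝ) ≤ (κ₁star : ℝ) := by exact_mod_cast hκ₁starpos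
  set ε : ℝ := min ((((κ₁ : ℝ) + 1) ^ 2 * ση ^ 2 - (κ₁ : ℝ) ^ 2 * ση ^ 2) / 2)
      ((((κ₁star : ℝ) + 1) ^ 2 * σηstar ^ 2 - (κ₁ : ℝ) ^ 2 * ση ^ 2) / 2) with hε
  have hε0 : 0 < ε := by
    apply lt_min
    · nlinarith
    · have := hrate
      nlinarith
  have hεle1 : ε ≤ (((κ₁ : ℝ) + 1) ^ 2 * ση ^ 2 - (κ₁ : ℝ) ^ 2 * ση ^ 2) / 2 := min_le_left _ _
  have hεle2 : ε ≤ (((κ₁star : ℝ) + 1) ^ 2 * σηstar ^ 2 - (κ₁ : ℝ) ^ 2 * ση ^ 2) / 2 :=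
    min_le_right _ _
  set K : ℝ := S + Sstar with hK
  have hK0 : 0 ≤ K := by rw [hK]; linarith
  -- key bound on the difference of main terms
  have hu : ∀ ℓ : ℕ, 1 ≤ ℓ →
      |A * Real.cos ((ℓ : ℝ) * θ) - B * Real.cos ((ℓ : ℝ) * φ)| ≤
        K * Real.exp (-(ℓ : ℝ) * ε) := by
    intro ℓ hℓ
    have hℓ1 : (1 : ℝ) ≤ (ℓ : ℝ) := by exact_mod_cast hℓ
    set Ea := Real.exp (-(ℓ : ℝ) * (κ₁ : ℝ) ^ 2 * ση ^ 2 / 2) with hEa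
    have hEa0 : 0 < Ea := by rw [hEa]; exact Real.exp_pos _
    have hEastar : Real.exp (-(ℓ : ℝ) * (κ₁star : ℝ) ^ 2 * σηstar ^ 2 / 2) = Ea := by
      rw [hEa]
      congr 1
      linear_combination (-(ℓ : ℝ) / 2) * hrate.symm
    have hd1 := aux_diff c hc ω ση κ₁ hκ₁pos hκ₁min ℓ
    have hd2 := aux_diff cstar hcstar ωstar σηstar κ₁star hκ₁starpos hκ₁starmin ℓ
    rw [hEastar] at hd2
    set t1 := ∑' k : ℕ, ‖c (k + 1)‖ ^ 2 * Real.cos (((k : ℝ) + 1) * (ℓ : ℝ) * ω) *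
        Real.exp (-(ℓ : ℝ) * ((k : ℝ) + 1) ^ 2 * ση ^ 2 / 2) with ht1
    set t2 := ∑' k : ℕ, ‖cstar (k + 1)‖ ^ 2 * Real.cos (((k : ℝ) + 1) * (ℓ : ℝ) * ωstar) *
        Real.exp (-(ℓ : ℝ) * ((k : ℝ) + 1) ^ 2 * σηstar ^ 2 / 2) with ht2
    have ht12 : t1 = t2 := heq ℓ hℓ
    set M1 := A * Real.cos ((κ₁ : ℝ) * (ℓ : ℝ) * ω) * Ea with hM1
    set M2 := B * Real.cos ((κ₁star : ℝ) * (ℓ : ℝ) * ωstar) * Ea with hM2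
    have htri : |M1 - M2| ≤
        S * Real.exp (-(ℓ : ℝ) * ((κ₁ : ℝ) + 1) ^ 2 * ση ^ 2 / 2) +
        Sstar * Real.exp (-(ℓ : ℝ) * ((κ₁star : ℝ) + 1) ^ 2 * σηstar ^ 2 / 2) := by
      have hsplit : M1 - M2 = -(t1 - M1) + (t2 - M2) := by rw [ht12]; ring
      rw [hsplit]
      calc |(-(t1 - M1)) + (t2 - M2)| ≤ |(-(t1 - M1))| + |t2 - M2| := abs_add_le _ _
        _ = |t1 - M1| + |t2 - M2| := by rw [abs_neg]
        _ ≤ S * Real.exp (-(ℓ : ℝ) * ((κ₁ : ℝ) + 1) ^ 2 * ση ^ 2 / 2) +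
            Sstar * Real.exp (-(ℓ : ℝ) * ((κ₁star : ℝ) + 1) ^ 2 * σηstar ^ 2 / 2) := by
            gcongr
    have hexp1 : Real.exp (-(ℓ : ℝ) * ((κ₁ : ℝ) + 1) ^ 2 * ση ^ 2 / 2) ≤
        Real.exp (-(ℓ : ℝ) * ε) * Ea := by
      rw [hEa, ← Real.exp_add]
      apply aux_exp_mono
      have hmm := mul_le_mul_of_nonneg_left hεle1 (le_trans zero_le_one hℓ1)
      linarith [hmm]
    have hexp2 : Real.exp (-(ℓ : ℝ) * ((κ₁star : ℝ) + 1) ^ 2 * σηstar ^ 2 / 2) ≤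
        Real.exp (-(ℓ : ℝ) * ε) * Ea := by
      rw [hEa, ← Real.exp_add]
      apply aux_exp_mono
      have hmm := mul_le_mul_of_nonneg_left hεle2 (le_trans zero_le_one hℓ1)
      linarith [hmm]
    have step2 : |M1 - M2| ≤ (K * Real.exp (-(ℓ : ℝ) * ε)) * Ea := by
      calc |M1 - M2| ≤ S * Real.exp (-(ℓ : ℝ) * ((κ₁ : ℝ) + 1) ^ 2 * ση ^ 2 / 2) +
            Sstar * Real.exp (-(ℓ : ℝ) * ((κ₁star : ℝ) + 1) ^ 2 * σηstar ^ 2 / 2) := htri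
        _ ≤ S * (Real.exp (-(ℓ : ℝ) * ε) * Ea) + Sstar * (Real.exp (-(ℓ : ℝ) * ε) * Ea) := by
            gcongr
        _ = (K * Real.exp (-(ℓ : ℝ) * ε)) * Ea := by rw [hK]; ring
    have habs : |A * Real.cos ((ℓ : ℝ) * θ) - B * Real.cos ((ℓ : ℝ) * φ)| * Ea = |M1 - M2| := by
      have harg1 : (ℓ : ℝ) * θ = (κ₁ : ℝ) * (ℓ : ℝ) * ω := by rw [hθ]; ring
      have harg2 : (ℓ : ℝ) * φ = (κ₁star : ℝ) * (ℓ : ℝ) * ωstar := by rw [hφ]; ring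
      have h9 : |A * Real.cos ((ℓ : ℝ) * θ) - B * Real.cos ((ℓ : ℝ) * φ)| * Ea =
          |(A * Real.cos ((ℓ : ℝ) * θ) - B * Real.cos ((ℓ : ℝ) * φ)) * Ea| := by
        rw [abs_mul, abs_of_pos hEa0]
      have h10 : (A * Real.cos ((ℓ : ℝ) * θ) - B * Real.cos ((ℓ : ℝ) * φ)) * Ea = M1 - M2 := by
        rw [harg1, harg2, hM1, hM2]; ring
      rw [h9, h10]
    have step3 : |A * Real.cos ((ℓ : ℝ) * θ) - B * Real.cos ((ℓ : ℝ) * φ)| * Ea ≤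
        (K * Real.exp (-(ℓ : ℝ) * ε)) * Ea := by rw [habs]; exact step2
    exact le_of_mul_le_mul_right step3 hEa0
  -- step: cos θ = cos φ
  have hcoseq : Real.cos θ = Real.cos φ := by
    by_contra hne
    have habs0 : 0 < |Real.cos θ - Real.cos φ| := abs_pos.mpr (sub_ne_zero.mpr hne)
    have hδ0 : 0 < B * |Real.cos θ - Real.cos φ| := mul_pos hB0 habs0
    obtain ⟨T, hT1, hTs⟩ := aux_exp_small ε (4 * K) (B * |Real.cos θ - Real.cos φ|) hε0 hδ0
    obtain ⟨m, hmT, hmcos⟩ := aux_cos_big φ (T + 1) (by omega)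
    set j : ℕ := m - 1 with hj
    have hm : m = j + 1 := by omega
    have hj1 : 1 ≤ j := by omega
    have hjT : T ≤ j := by omega
    have hu0 := hu j hj1
    have hu1 := hu (j + 1) (by omega)
    have hu2 := hu (j + 2) (by omega)
    have hc1 : ((j + 1 : ℕ) : ℝ) = (j : ℝ) + 1 := by push_cast; ring
    have hc2 : ((j + 2 : ℕ) : ℝ) = (j : ℝ) + 2 := by push_cast; ring
    rw [hc1] at hu1
    rw [hc2] at hu2
    have hv : A * Real.cos (((j : ℝ) + 2) * θ) - B * Real.cos (((j : ℝ) + 2) * φ) +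
        (A * Real.cos ((j : ℝ) * θ) - B * Real.cos ((j : ℝ) * φ)) -
        2 * Real.cos θ * (A * Real.cos (((j : ℝ) + 1) * θ) - B * Real.cos (((j : ℝ) + 1) * φ)) =
        2 * B * Real.cos (((j : ℝ) + 1) * φ) * (Real.cos θ - Real.cos φ) := by
      rw [aux_cos_rec θ j, aux_cos_rec φ j]
      ring
    have hE0 : 0 < Real.exp (-(j : ℝ) * ε) := Real.exp_pos _
    have hmono1 : Real.exp (-((j : ℝ) + 1) * ε) ≤ Real.exp (-(j : ℝ) * ε) := by
      apply aux_exp_mono; nlinarith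
    have hmono2 : Real.exp (-((j : ℝ) + 2) * ε) ≤ Real.exp (-(j : ℝ) * ε) := by
      apply aux_exp_mono; nlinarith
    have hup : |A * Real.cos (((j : ℝ) + 1) * θ) - B * Real.cos (((j : ℝ) + 1) * φ)| ≤
        K * Real.exp (-(j : ℝ) * ε) := by
      calc _ ≤ K * Real.exp (-((j : ℝ) + 1) * ε) := hu1
        _ ≤ K * Real.exp (-(j : ℝ) * ε) := by
            exact mul_le_mul_of_nonneg_left hmono1 hK0
    have hup2 : |A * Real.cos (((j : ℝ) + 2) * θ) - B * Real.cos (((j : ℝ) + 2) * φ)| ≤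
        K * Real.exp (-(j : ℝ) * ε) := by
      calc _ ≤ K * Real.exp (-((j : ℝ) + 2) * ε) := hu2
        _ ≤ K * Real.exp (-(j : ℝ) * ε) := by
            exact mul_le_mul_of_nonneg_left hmono2 hK0
    have hup0 : |A * Real.cos ((j : ℝ) * θ) - B * Real.cos ((j : ℝ) * φ)| ≤
        K * Real.exp (-(j : ℝ) * ε) := hu0
    have h2c : |2 * Real.cos θ| ≤ 2 := by
      rw [abs_mul, (by norm_num : |(2 : ℝ)| = 2)]
      linarith [Real.abs_cos_le_one θ]
    have hprod : |2 * Real.cos θ| *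
        |A * Real.cos (((j : ℝ) + 1) * θ) - B * Real.cos (((j : ℝ) + 1) * φ)| ≤
        2 * (K * Real.exp (-(j : ℝ) * ε)) :=
      mul_le_mul h2c hup (abs_nonneg _) (by norm_num)
    have e1 : |A * Real.cos (((j : ℝ) + 2) * θ) - B * Real.cos (((j : ℝ) + 2) * φ) +
        (A * Real.cos ((j : ℝ) * θ) - B * Real.cos ((j : ℝ) * φ)) -
        2 * Real.cos θ * (A * Real.cos (((j : ℝ) + 1) * θ) - B * Real.cos (((j : ℝ) + 1) * φ))|
        ≤ |A * Real.cos (((j : ℝ) + 2) * θ) - B * Real.cos (((j : ℝ) + 2) * φ)| +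
          |A * Real.cos ((j : ℝ) * θ) - B * Real.cos ((j : ℝ) * φ)| +
          |2 * Real.cos θ| * |A * Real.cos (((j : ℝ) + 1) * θ) -
            B * Real.cos (((j : ℝ) + 1) * φ)| := by
      calc _ ≤ |A * Real.cos (((j : ℝ) + 2) * θ) - B * Real.cos (((j : ℝ) + 2) * φ) +
            (A * Real.cos ((j : ℝ) * θ) - B * Real.cos ((j : ℝ) * φ))| +
            |2 * Real.cos θ * (A * Real.cos (((j : ℝ) + 1) * θ) -
              B * Real.cos (((j : ℝ) + 1) * φ))| := abs_sub _ _
        _ ≤ _ := by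
            rw [abs_mul]
            gcongr
            exact abs_add_le _ _
    have hvu : |2 * B * Real.cos (((j : ℝ) + 1) * φ) * (Real.cos θ - Real.cos φ)| ≤
        4 * K * Real.exp (-(j : ℝ) * ε) := by
      rw [← hv]
      linarith [e1, hup0, hup2, hprod]
    have hmcos' : 1 / 2 ≤ |Real.cos (((j : ℝ) + 1) * φ)| := by
      have hmm : ((m : ℕ) : ℝ) = (j : ℝ) + 1 := by rw [hm]; push_cast; ring
      rwa [hmm] at hmcos
    have hvl : B * |Real.cos θ - Real.cos φ| ≤
        |2 * B * Real.cos (((j : ℝ) + 1) * φ) * (Real.cos θ - Real.cos φ)| := by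
      rw [abs_mul, abs_mul, abs_mul, (by norm_num : |(2 : ℝ)| = 2), abs_of_pos hB0]
      have h7 : (1 / 2) * |Real.cos θ - Real.cos φ| ≤
          |Real.cos (((j : ℝ) + 1) * φ)| * |Real.cos θ - Real.cos φ| :=
        mul_le_mul_of_nonneg_right hmcos' (abs_nonneg _)
      have h8 := mul_le_mul_of_nonneg_left h7 (by linarith : (0 : ℝ) ≤ 2 * B)
      linarith [h8]
    have hsmall := hTs j hjT
    linarith
  -- conclude A = B
  have hAB : A = B := by
    by_contra hne
    have hδ0 : 0 < |A - B| / 2 := by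
      have := abs_pos.mpr (sub_ne_zero.mpr hne)
      linarith
    obtain ⟨T, hT1, hTs⟩ := aux_exp_small ε K (|A - B| / 2) hε0 hδ0
    obtain ⟨m, hmT, hmcos⟩ := aux_cos_big θ T hT1
    have hceq := aux_cos_eq θ φ hcoseq m
    have hum := hu m (le_trans hT1 hmT)
    have huv : |A * Real.cos ((m : ℝ) * θ) - B * Real.cos ((m : ℝ) * φ)| =
        |A - B| * |Real.cos ((m : ℝ) * θ)| := by
      rw [← hceq, ← abs_mul]
      congr 1
      ring
    rw [huv] at hum
    have hsmall := hTs m hmT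
    have h3 : |A - B| * (1 / 2) ≤ |A - B| * |Real.cos ((m : ℝ) * θ)| :=
      mul_le_mul_of_nonneg_left hmcos (abs_nonneg _)
    have h4 : |A - B| * (1 / 2) < |A - B| / 2 := lt_of_le_of_lt (le_trans h3 hum) hsmall
    linarith [h4]
  have hsq : ‖c κ₁‖ ^ 2 = ‖cstar κ₁star‖ ^ 2 := hAB
  calc ‖c κ₁‖ = Real.sqrt (‖c κ₁‖ ^ 2) := (Real.sqrt_sq (norm_nonneg _)).symm
    _ = Real.sqrt (‖cstar κ₁star‖ ^ 2) := by rw [hsq]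
    _ = ‖cstar κ₁star‖ := Real.sqrt_sq (norm_nonneg _)
end
end

section
/- In the setting of the preceding claim (equality of the two cosine series for all ℓ ≥ 1, with κ_i(f) = γ·κ_i(f⋆) for all i), assume in addition that each of the families {κ_i(f)}_{i∈ℕ₊} and {κ_i(f⋆)}_{i∈ℕ₊} is setwise coprime. Then γ = 1, and if moreover ω⋆ ∉ πℚ and ω, ω⋆ ∈ (0,π), then ω = ω⋆. -/
open Real Set

noncomputable section

/-- `kappa f i` is the `(i+1)`-st positive integer `k` with `c_k(f) ≠ 0`. -/
def kappa (f : ℝ → ℝ) (i : ℕ) : ℕ :=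
  Nat.nth (fun k : ℕ => 0 < k ∧ fc f (k : ℤ) ≠ 0) i

namespace OmegaIdentAux

open Filter Topology

lemma no_cos_tendsto_zero (θ : ℝ) :
    ¬ Tendsto (fun ℓ : ℕ => Real.cos ((ℓ : ℝ) * θ)) atTop (nhds 0) := by
  intro h
  have h2 : Tendsto (fun ℓ : ℕ => Real.cos (((2 * ℓ : ℕ) : ℝ) * θ)) atTop (nhds 0) :=
    h.comp (tendsto_atTop_mono (fun n => by simp only [id_eq]; omega) tendsto_id)
  have h3 : Tendsto (fun ℓ : ℕ => 2 * Real.cos ((ℓ : ℝ) * θ) ^ 2 - 1) atTop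
      (nhds (2 * 0 ^ 2 - 1)) := ((h.pow 2).const_mul 2).sub_const 1
  have heq : (fun ℓ : ℕ => Real.cos (((2 * ℓ : ℕ) : ℝ) * θ)) =
      fun ℓ : ℕ => 2 * Real.cos ((ℓ : ℝ) * θ) ^ 2 - 1 := by
    funext ℓ
    rw [show ((2 * ℓ : ℕ) : ℝ) * θ = 2 * ((ℓ : ℝ) * θ) by push_cast; ring, Real.cos_two_mul]
  rw [heq] at h2
  have := tendsto_nhds_unique h2 h3
  norm_num at this

lemma cos_tendsto_zero_of_const_mul {c : ℝ} {u : ℕ → ℝ} (hc : c ≠ 0)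
    (h : Tendsto (fun ℓ : ℕ => c * u ℓ) atTop (nhds 0)) : Tendsto u atTop (nhds 0) := by
  have := h.const_mul (1/c)
  simp only [mul_zero] at this
  convert this using 2 with ℓ
  field_simp

lemma cos_eq_of_tendsto {A B α β : ℝ} (hA : 0 < A) (hB : 0 < B)
    (h : Tendsto (fun ℓ : ℕ => A * Real.cos ((ℓ : ℝ) * α) - B * Real.cos ((ℓ : ℝ) * β))
      atTop (nhds 0)) :
    A = B ∧ ∀ ℓ : ℕ, Real.cos ((ℓ : ℝ) * α) = Real.cos ((ℓ : ℝ) * β) := by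
  set g : ℕ → ℝ := fun ℓ : ℕ => A * Real.cos ((ℓ : ℝ) * α) - B * Real.cos ((ℓ : ℝ) * β) with hg
  have hshift : ∀ k : ℕ, Tendsto (fun ℓ : ℕ => g (ℓ + k)) atTop (nhds 0) :=
    fun k => (tendsto_add_atTop_iff_nat k).2 h
  have hkey : Tendsto (fun ℓ : ℕ => 2 * A * (Real.cos α - Real.cos β) *
      Real.cos (((ℓ + 1 : ℕ) : ℝ) * α)) atTop (nhds 0) := by
    have h0 : Tendsto (fun ℓ : ℕ => g (ℓ + 2) + g ℓ - 2 * Real.cos β * g (ℓ + 1)) atTop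
        (nhds (0 + 0 - 2 * Real.cos β * 0)) :=
      ((hshift 2).add h).sub ((hshift 1).const_mul _)
    have hid : (fun ℓ : ℕ => g (ℓ + 2) + g ℓ - 2 * Real.cos β * g (ℓ + 1)) =
        fun ℓ : ℕ => 2 * A * (Real.cos α - Real.cos β) * Real.cos (((ℓ + 1 : ℕ) : ℝ) * α) := by
      funext ℓ
      have e1 : ((ℓ + 2 : ℕ) : ℝ) * α = ((ℓ + 1 : ℕ) : ℝ) * α + α := by push_cast; ring
      have e1' : ((ℓ + 2 : ℕ) : ℝ) * β = ((ℓ + 1 : ℕ) : ℝ) * β + β := by push_cast; ring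
      have e2 : (ℓ : ℝ) * α = ((ℓ + 1 : ℕ) : ℝ) * α - α := by push_cast; ring
      have e2' : (ℓ : ℝ) * β = ((ℓ + 1 : ℕ) : ℝ) * β - β := by push_cast; ring
      simp only [hg, e1, e1', e2, e2', Real.cos_add, Real.cos_sub]
      ring
    rw [hid] at h0
    simpa using h0
  have hcc : Real.cos α = Real.cos β := by
    by_contra hne
    have hc : 2 * A * (Real.cos α - Real.cos β) ≠ 0 := by
      have : Real.cos α - Real.cos β ≠ 0 := sub_ne_zero.2 hne
      positivity
    have h4 := cos_tendsto_zero_of_const_mul hc hkey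
    have h5 := (tendsto_add_atTop_iff_nat (f := fun ℓ : ℕ => Real.cos ((ℓ : ℝ) * α)) 1).1 h4
    exact no_cos_tendsto_zero α h5
  have hcos : ∀ ℓ : ℕ, Real.cos ((ℓ : ℝ) * α) = Real.cos ((ℓ : ℝ) * β) := by
    intro ℓ
    have t1 := Polynomial.Chebyshev.T_real_cos α (ℓ : ℤ)
    have t2 := Polynomial.Chebyshev.T_real_cos β (ℓ : ℤ)
    rw [hcc] at t1
    have := t1.symm.trans t2
    push_cast at this
    exact this
  refine ⟨?_, hcos⟩
  by_contra hne
  have hg2 : g = fun ℓ : ℕ => (A - B) * Real.cos ((ℓ : ℝ) * β) := by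
    funext ℓ; simp only [hg, hcos ℓ]; ring
  rw [show g = fun ℓ : ℕ => (A - B) * Real.cos ((ℓ : ℝ) * β) from hg2] at h
  exact no_cos_tendsto_zero β
    (cos_tendsto_zero_of_const_mul (sub_ne_zero.2 hne) h)

lemma exp_neg_nat_tendsto {c : ℝ} (hc : 0 < c) :
    Tendsto (fun ℓ : ℕ => Real.exp (-(ℓ : ℝ) * c)) atTop (nhds 0) := by
  have h : (fun ℓ : ℕ => Real.exp (-(ℓ : ℝ) * c)) = fun ℓ : ℕ => Real.exp (-c) ^ ℓ := by
    funext ℓ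
    rw [← Real.exp_nat_mul]
    ring_nf
  rw [h]
  exact tendsto_pow_atTop_nhds_zero_of_lt_one (Real.exp_pos _).le
    (Real.exp_lt_one_iff.2 (by linarith))

lemma exp_mul_exp_eq (ℓ x s : ℝ) :
    Real.exp (-ℓ * x) * Real.exp (ℓ * s) = Real.exp (-ℓ * (x - s)) := by
  rw [← Real.exp_add]; congr 1; ring

lemma abs_le_of_abs_mul_exp {W c u : ℝ} (h : |W * Real.exp (-u)| ≤ c) :
    |W| ≤ c * Real.exp u := by
  rw [abs_mul, Real.abs_exp] at h
  calc |W| = |W| * Real.exp (-u) * Real.exp u := by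
        rw [mul_assoc, ← Real.exp_add]; simp
    _ ≤ c * Real.exp u := mul_le_mul_of_nonneg_right h (Real.exp_pos u).le

lemma not_lt_aux {A B α β s t r C : ℝ} (hA : 0 < A)
    (hst : s < t) (hsr : s < r)
    (h : ∀ ℓ : ℕ, 1 ≤ ℓ → |A * Real.cos ((ℓ : ℝ) * α) * Real.exp (-(ℓ : ℝ) * s)
        - B * Real.cos ((ℓ : ℝ) * β) * Real.exp (-(ℓ : ℝ) * t)| ≤ C * Real.exp (-(ℓ : ℝ) * r)) :
    False := by
  have key : ∀ ℓ : ℕ, 1 ≤ ℓ → |A * Real.cos ((ℓ : ℝ) * α)| ≤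
      C * Real.exp (-(ℓ : ℝ) * (r - s)) + |B| * Real.exp (-(ℓ : ℝ) * (t - s)) := by
    intro ℓ hℓ
    have hD := h ℓ hℓ
    have habsY : |B * Real.cos ((ℓ : ℝ) * β) * Real.exp (-(ℓ : ℝ) * t)| ≤
        |B| * Real.exp (-(ℓ : ℝ) * t) := by
      rw [abs_mul, abs_mul, Real.abs_exp]
      have : |Real.cos ((ℓ : ℝ) * β)| ≤ 1 := Real.abs_cos_le_one _
      exact mul_le_mul_of_nonneg_right (mul_le_of_le_one_right (abs_nonneg B) this)
        (Real.exp_pos _).le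
    have hX : |A * Real.cos ((ℓ : ℝ) * α) * Real.exp (-(ℓ : ℝ) * s)| ≤
        C * Real.exp (-(ℓ : ℝ) * r) + |B| * Real.exp (-(ℓ : ℝ) * t) := by
      have h2 := abs_sub_abs_le_abs_sub
        (A * Real.cos ((ℓ : ℝ) * α) * Real.exp (-(ℓ : ℝ) * s))
        (B * Real.cos ((ℓ : ℝ) * β) * Real.exp (-(ℓ : ℝ) * t))
      linarith
    have h3 : |A * Real.cos ((ℓ : ℝ) * α)| ≤
        (C * Real.exp (-(ℓ : ℝ) * r) + |B| * Real.exp (-(ℓ : ℝ) * t)) *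
          Real.exp ((ℓ : ℝ) * s) := by
      apply abs_le_of_abs_mul_exp
      rw [show -((ℓ : ℝ) * s) = -(ℓ : ℝ) * s by ring]
      exact hX
    calc |A * Real.cos ((ℓ : ℝ) * α)| ≤
        (C * Real.exp (-(ℓ : ℝ) * r) + |B| * Real.exp (-(ℓ : ℝ) * t)) *
          Real.exp ((ℓ : ℝ) * s) := h3
      _ = C * Real.exp (-(ℓ : ℝ) * (r - s)) + |B| * Real.exp (-(ℓ : ℝ) * (t - s)) := by
          rw [add_mul, mul_assoc, mul_assoc, exp_mul_exp_eq, exp_mul_exp_eq]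
  have htend : Tendsto (fun ℓ : ℕ => A * Real.cos ((ℓ : ℝ) * α)) atTop (nhds 0) := by
    have hg0 : Tendsto (fun ℓ : ℕ => C * Real.exp (-(ℓ : ℝ) * (r - s)) +
        |B| * Real.exp (-(ℓ : ℝ) * (t - s))) atTop (nhds 0) := by
      have := ((exp_neg_nat_tendsto (by linarith : (0:ℝ) < r - s)).const_mul C).add
        ((exp_neg_nat_tendsto (by linarith : (0:ℝ) < t - s)).const_mul |B|)
      simpa using this
    refine squeeze_zero_norm' (eventually_atTop.2 ⟨1, fun ℓ hℓ => ?_⟩) hg0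
    rw [Real.norm_eq_abs]
    exact key ℓ hℓ
  exact no_cos_tendsto_zero α (cos_tendsto_zero_of_const_mul hA.ne' htend)

lemma key_identification {A B α β s t r C : ℝ} (hA : 0 < A) (hB : 0 < B)
    (hr : min s t < r)
    (h : ∀ ℓ : ℕ, 1 ≤ ℓ → |A * Real.cos ((ℓ : ℝ) * α) * Real.exp (-(ℓ : ℝ) * s)
        - B * Real.cos ((ℓ : ℝ) * β) * Real.exp (-(ℓ : ℝ) * t)| ≤ C * Real.exp (-(ℓ : ℝ) * r)) :
    s = t ∧ A = B ∧ ∀ ℓ : ℕ, Real.cos ((ℓ : ℝ) * α) = Real.cos ((ℓ : ℝ) * β) := by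
  have hst : s = t := by
    rcases lt_trichotomy s t with hlt | heq | hgt
    · exact absurd (not_lt_aux hA hlt (by rw [min_eq_left hlt.le] at hr; exact hr) h) id
    · exact heq
    · have h' : ∀ ℓ : ℕ, 1 ≤ ℓ → |B * Real.cos ((ℓ : ℝ) * β) * Real.exp (-(ℓ : ℝ) * t)
          - A * Real.cos ((ℓ : ℝ) * α) * Real.exp (-(ℓ : ℝ) * s)| ≤
          C * Real.exp (-(ℓ : ℝ) * r) := fun ℓ hℓ => by
        rw [abs_sub_comm]; exact h ℓ hℓ
      exact absurd (not_lt_aux hB hgt (by rw [min_eq_right hgt.le] at hr; exact hr) h') id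
  subst hst
  have hr' : s < r := by simpa using hr
  have htend : Tendsto (fun ℓ : ℕ =>
      A * Real.cos ((ℓ : ℝ) * α) - B * Real.cos ((ℓ : ℝ) * β)) atTop (nhds 0) := by
    have hg0 : Tendsto (fun ℓ : ℕ => C * Real.exp (-(ℓ : ℝ) * (r - s))) atTop (nhds 0) := by
      have := (exp_neg_nat_tendsto (show (0:ℝ) < r - s by linarith)).const_mul C
      simpa using this
    refine squeeze_zero_norm' (eventually_atTop.2 ⟨1, fun ℓ hℓ => ?_⟩) hg0
    · have hD := h ℓ hℓ
      have h2 : |(A * Real.cos ((ℓ : ℝ) * α) - B * Real.cos ((ℓ : ℝ) * β)) *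
          Real.exp (-((ℓ : ℝ) * s))| ≤ C * Real.exp (-(ℓ : ℝ) * r) := by
        rw [show -((ℓ : ℝ) * s) = -(ℓ : ℝ) * s by ring]
        calc |(A * Real.cos ((ℓ : ℝ) * α) - B * Real.cos ((ℓ : ℝ) * β)) *
            Real.exp (-(ℓ : ℝ) * s)|
            = |A * Real.cos ((ℓ : ℝ) * α) * Real.exp (-(ℓ : ℝ) * s)
              - B * Real.cos ((ℓ : ℝ) * β) * Real.exp (-(ℓ : ℝ) * s)| := by ring_nf
          _ ≤ C * Real.exp (-(ℓ : ℝ) * r) := hD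
      have h3 := abs_le_of_abs_mul_exp h2
      rw [Real.norm_eq_abs]
      calc |A * Real.cos ((ℓ : ℝ) * α) - B * Real.cos ((ℓ : ℝ) * β)|
          ≤ C * Real.exp (-(ℓ : ℝ) * r) * Real.exp ((ℓ : ℝ) * s) := h3
        _ = C * Real.exp (-(ℓ : ℝ) * (r - s)) := by rw [mul_assoc, exp_mul_exp_eq]
  obtain ⟨hAB, hcos⟩ := cos_eq_of_tendsto hA hB htend
  exact ⟨rfl, hAB, hcos⟩

lemma term_norm_le (v : ℕ → ℝ) (hv : ∀ n, 0 ≤ v n) (ω σ : ℝ) (ℓ k : ℕ) :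
    ‖v k * Real.cos (((k : ℝ) + 1) * (ℓ : ℝ) * ω) *
      Real.exp (-(ℓ : ℝ) * ((k : ℝ) + 1) ^ 2 * σ ^ 2 / 2)‖ ≤
    v k * Real.exp (-(ℓ : ℝ) * ((k : ℝ) + 1) ^ 2 * σ ^ 2 / 2) := by
  rw [Real.norm_eq_abs, abs_mul, abs_mul, abs_of_nonneg (hv k), Real.abs_exp]
  have h1 : |Real.cos (((k : ℝ) + 1) * (ℓ : ℝ) * ω)| ≤ 1 := Real.abs_cos_le_one _
  have := mul_le_of_le_one_right (hv k) h1
  exact mul_le_mul_of_nonneg_right this (Real.exp_pos _).le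

lemma summable_term (v : ℕ → ℝ) (hv : ∀ n, 0 ≤ v n) (hsum : Summable v) (ω σ : ℝ) (ℓ : ℕ) :
    Summable (fun k : ℕ => v k * Real.cos (((k : ℝ) + 1) * (ℓ : ℝ) * ω) *
      Real.exp (-(ℓ : ℝ) * ((k : ℝ) + 1) ^ 2 * σ ^ 2 / 2)) := by
  apply Summable.of_norm_bounded hsum
  intro k
  refine (term_norm_le v hv ω σ ℓ k).trans ?_
  have : Real.exp (-(ℓ : ℝ) * ((k : ℝ) + 1) ^ 2 * σ ^ 2 / 2) ≤ 1 := by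
    rw [Real.exp_le_one_iff]
    have : (0:ℝ) ≤ (ℓ : ℝ) * ((k : ℝ) + 1) ^ 2 * σ ^ 2 / 2 := by positivity
    linarith
  exact mul_le_of_le_one_right (hv k) this

lemma series_decomp (v : ℕ → ℝ) (hv : ∀ n, 0 ≤ v n) (hsum : Summable v)
    (ω σ : ℝ) (K ℓ : ℕ) :
    |(∑' k : ℕ, v k * Real.cos (((k : ℝ) + 1) * (ℓ : ℝ) * ω) *
        Real.exp (-(ℓ : ℝ) * ((k : ℝ) + 1) ^ 2 * σ ^ 2 / 2)) -
      ∑ k ∈ Finset.range K, v k * Real.cos (((k : ℝ) + 1) * (ℓ : ℝ) * ω) *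
        Real.exp (-(ℓ : ℝ) * ((k : ℝ) + 1) ^ 2 * σ ^ 2 / 2)| ≤
    (∑' k : ℕ, v (k + K)) * Real.exp (-(ℓ : ℝ) * ((K : ℝ) + 1) ^ 2 * σ ^ 2 / 2) := by
  set T : ℕ → ℝ := fun k => v k * Real.cos (((k : ℝ) + 1) * (ℓ : ℝ) * ω) *
    Real.exp (-(ℓ : ℝ) * ((k : ℝ) + 1) ^ 2 * σ ^ 2 / 2) with hT
  have hTs : Summable T := summable_term v hv hsum ω σ ℓ
  have hsplit := Summable.sum_add_tsum_nat_add (f := T) K hTs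
  have hdiff : (∑' k : ℕ, T k) - ∑ k ∈ Finset.range K, T k = ∑' k : ℕ, T (k + K) := by
    linarith [hsplit]
  rw [hdiff]
  have hbound : ∀ k : ℕ, ‖T (k + K)‖ ≤
      v (k + K) * Real.exp (-(ℓ : ℝ) * ((K : ℝ) + 1) ^ 2 * σ ^ 2 / 2) := by
    intro k
    refine (term_norm_le v hv ω σ ℓ (k + K)).trans ?_
    have hexp : Real.exp (-(ℓ : ℝ) * (((k + K : ℕ) : ℝ) + 1) ^ 2 * σ ^ 2 / 2) ≤
        Real.exp (-(ℓ : ℝ) * ((K : ℝ) + 1) ^ 2 * σ ^ 2 / 2) := by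
      rw [Real.exp_le_exp]
      have h1 : ((K : ℝ) + 1) ^ 2 ≤ (((k + K : ℕ) : ℝ) + 1) ^ 2 := by
        have : (K : ℝ) ≤ ((k + K : ℕ) : ℝ) := by push_cast; linarith [Nat.cast_nonneg (α := ℝ) k]
        nlinarith [Nat.cast_nonneg (α := ℝ) K]
      have hl : (0 : ℝ) ≤ (ℓ : ℝ) := Nat.cast_nonneg _
      have key := mul_nonneg (mul_nonneg hl (sub_nonneg.2 h1)) (sq_nonneg σ)
      nlinarith [key]
    exact mul_le_mul_of_nonneg_left hexp (hv _)
  have hsum2 : Summable (fun k : ℕ => v (k + K) *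
      Real.exp (-(ℓ : ℝ) * ((K : ℝ) + 1) ^ 2 * σ ^ 2 / 2)) :=
    ((summable_nat_add_iff K).2 hsum).mul_right _
  calc |∑' k : ℕ, T (k + K)| ≤ ∑' k : ℕ, ‖T (k + K)‖ := by
        rw [← Real.norm_eq_abs]
        exact norm_tsum_le_tsum_norm ((hTs.norm).comp_injective (add_left_injective K))
    _ ≤ ∑' k : ℕ, v (k + K) * Real.exp (-(ℓ : ℝ) * ((K : ℝ) + 1) ^ 2 * σ ^ 2 / 2) := by
        apply Summable.tsum_le_tsum hbound _ hsum2
        exact (hTs.norm).comp_injective (add_left_injective K)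
    _ = (∑' k : ℕ, v (k + K)) * Real.exp (-(ℓ : ℝ) * ((K : ℝ) + 1) ^ 2 * σ ^ 2 / 2) :=
        tsum_mul_right

lemma rat_scaling_eq_one (p q : ℕ → Prop)
    (hpc : ∀ e : ℕ, (∀ k, p k → e ∣ k) → e = 1)
    (hqc : ∀ e : ℕ, (∀ k, q k → e ∣ k) → e = 1)
    (hp0 : ∀ k, p k → 0 < k)
    (γ : ℚ) (hγ : ∀ i, ((Nat.nth p i : ℚ)) = γ * (Nat.nth q i : ℚ)) : γ = 1 := by
  classical
  have hpne : ∃ k, p k := by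
    by_contra h
    exact absurd (hpc 0 (fun k hk => (h ⟨k, hk⟩).elim)) (by norm_num)
  have hden : γ.den = 1 := by
    apply hqc
    intro k hk
    have hnth : Nat.nth q (Nat.count q k) = k := Nat.nth_count hk
    have h := hγ (Nat.count q k)
    rw [hnth] at h
    set m := Nat.nth p (Nat.count q k) with hm
    have h2 : (m : ℚ) * (γ.den : ℚ) = (γ.num : ℚ) * (k : ℚ) := by
      rw [h, mul_right_comm, Rat.mul_den_eq_num]
    have h3 : (m : ℤ) * (γ.den : ℤ) = γ.num * (k : ℤ) := by exact_mod_cast h2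
    have h4 : (γ.den : ℤ) ∣ γ.num * (k : ℤ) := ⟨m, by linarith [h3]⟩
    have h5 : γ.den ∣ γ.num.natAbs * k := by
      have := Int.natAbs_dvd_natAbs.2 h4
      simpa [Int.natAbs_mul] using this
    exact (Nat.Coprime.dvd_of_dvd_mul_left γ.reduced.symm h5)
  have hnum : γ.num.natAbs = 1 := by
    apply hpc
    intro k hk
    have hnth : Nat.nth p (Nat.count p k) = k := Nat.nth_count hk
    have h := hγ (Nat.count p k)
    rw [hnth] at h
    set n := Nat.nth q (Nat.count p k) with hn
    have hγnum : (γ : ℚ) = (γ.num : ℚ) := ((Rat.den_eq_one_iff γ).1 hden).symm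
    rw [hγnum] at h
    have h3 : (k : ℤ) = γ.num * (n : ℤ) := by exact_mod_cast h
    have h4 : γ.num.natAbs ∣ k := by
      have : (γ.num : ℤ) ∣ (k : ℤ) := ⟨n, h3⟩
      exact Int.natAbs_dvd_natAbs.2 (by simpa using this)
    exact h4
  have hnum1 : γ.num = 1 := by
    rcases Int.natAbs_eq_iff.1 hnum with h1 | h1
    · simpa using h1
    · exfalso
      norm_num at h1
      obtain ⟨k, hk⟩ := hpne
      have hnth : Nat.nth p (Nat.count p k) = k := Nat.nth_count hk
      have h := hγ (Nat.count p k)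
      rw [hnth] at h
      have hγnum : (γ : ℚ) = (γ.num : ℚ) := ((Rat.den_eq_one_iff γ).1 hden).symm
      rw [hγnum, h1] at h
      have hkpos := hp0 k hk
      push_cast at h
      have hk0 : (0:ℚ) < (k:ℚ) := by exact_mod_cast hkpos
      have hn0 : (0:ℚ) ≤ (Nat.nth q (Nat.count p k) : ℚ) := Nat.cast_nonneg _
      nlinarith [h]
  have : γ = (γ.num : ℚ) := ((Rat.den_eq_one_iff γ).1 hden).symm
  rw [this, hnum1]
  norm_num

lemma pred_imp_of_nth_eq (p q : ℕ → Prop) (hp0 : ∀ k, p k → 0 < k)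
    (h : ∀ i, Nat.nth p i = Nat.nth q i) : ∀ k, p k → q k := by
  classical
  intro k hk
  have hnth : Nat.nth p (Nat.count p k) = k := Nat.nth_count hk
  have h2 : Nat.nth q (Nat.count p k) = k := by rw [← h]; exact hnth
  have hne : Nat.nth q (Nat.count p k) ≠ 0 := by rw [h2]; exact (hp0 k hk).ne'
  have := Nat.nth_mem_of_ne_zero hne
  rwa [h2] at this

lemma exists_eq_two_pi_int (S : ℕ → Prop) (t : ℝ) (hS : ∃ k, S k ∧ 0 < k)
    (hdvd : ∀ e : ℕ, (∀ k, S k → e ∣ k) → e = 1)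
    (h : ∀ k, S k → ∃ m : ℤ, (k : ℝ) * t = (m : ℝ) * (2 * π)) :
    ∃ m : ℤ, t = (m : ℝ) * (2 * π) := by
  classical
  obtain ⟨k₀, hk₀S, hk₀pos⟩ := hS
  have hex : ∃ n : ℕ, 0 < n ∧ ∃ m : ℤ, (n : ℝ) * t = (m : ℝ) * (2 * π) :=
    ⟨k₀, hk₀pos, h k₀ hk₀S⟩
  set d := Nat.find hex with hd
  obtain ⟨hdpos, md, hmd⟩ := Nat.find_spec hex
  rw [← hd] at hmd hdpos
  have hddvd : ∀ k, S k → d ∣ k := by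
    intro k hk
    obtain ⟨mk, hmk⟩ := h k hk
    have hmod : k % d + d * (k / d) = k := Nat.mod_add_div k d
    by_contra hnd
    have hrpos : 0 < k % d := by
      rcases Nat.eq_zero_or_pos (k % d) with h0 | h0
      · exact absurd (Nat.dvd_of_mod_eq_zero h0) hnd
      · exact h0
    have hrlt : k % d < d := Nat.mod_lt k hdpos
    have hQr : 0 < k % d ∧ ∃ m : ℤ, ((k % d : ℕ) : ℝ) * t = (m : ℝ) * (2 * π) := by
      refine ⟨hrpos, mk - (k / d : ℕ) * md, ?_⟩
      have hcast : ((k % d : ℕ) : ℝ) = (k : ℝ) - (d : ℝ) * ((k / d : ℕ) : ℝ) := by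
        have := congrArg (fun n : ℕ => (n : ℝ)) hmod
        push_cast at this
        linarith
      have h3 := congrArg (fun x : ℝ => ((k / d : ℕ) : ℝ) * x) hmd
      have hgoal : ((k % d : ℕ) : ℝ) * t =
          ((mk : ℝ) - ((k / d : ℕ) : ℝ) * (md : ℝ)) * (2 * π) := by
        rw [hcast]; nlinarith [h3, hmk]
      rw [hgoal]
      simp only [Int.cast_sub, Int.cast_mul, Int.cast_natCast]
    exact Nat.find_min hex hrlt hQr
  have hd1 : d = 1 := hdvd d hddvd
  refine ⟨md, ?_⟩
  rw [hd1] at hmd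
  norm_num at hmd
  exact hmd

end OmegaIdentAux

open OmegaIdentAux in
set_option maxHeartbeats 2000000 in
/-- Under equality of the two cosine series for all `ℓ ≥ 1`, with `κ_i(f) = γ·κ_i(f⋆)`
for all `i`, if both families `{κ_i(f)}` and `{κ_i(f⋆)}` are setwise coprime then
`γ = 1`; if moreover `ω⋆ ∉ πℚ` and `ω, ω⋆ ∈ (0,π)`, then `ω = ω⋆`. -/
theorem gamma_eq_one_and_omega_identification
    (f fstar : ℝ → ℝ) (hf : IsOscPattern f) (hfstar : IsOscPattern fstar)
    (hf_nonconst : ∃ x y : ℝ, f x ≠ f y) (hfstar_nonconst : ∃ x y : ℝ, fstar x ≠ fstar y)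
    (ω ωstar ση σηstar : ℝ) (hση : 0 < ση) (hσηstar : 0 < σηstar)
    (heq : ∀ ℓ : ℕ, 1 ≤ ℓ →
      (∑' k : ℕ, ‖fc f ((k : ℤ) + 1)‖ ^ 2 * Real.cos (((k : ℝ) + 1) * (ℓ : ℝ) * ω) *
          Real.exp (-(ℓ : ℝ) * ((k : ℝ) + 1) ^ 2 * ση ^ 2 / 2)) =
      ∑' k : ℕ, ‖fc fstar ((k : ℤ) + 1)‖ ^ 2 *
          Real.cos (((k : ℝ) + 1) * (ℓ : ℝ) * ωstar) *
          Real.exp (-(ℓ : ℝ) * ((k : ℝ) + 1) ^ 2 * σηstar ^ 2 / 2))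
    (γ : ℚ) (hγ : ∀ i : ℕ, (kappa f i : ℚ) = γ * (kappa fstar i : ℚ))
    (hcoprime : ∀ e : ℕ, (∀ k : ℕ, 0 < k → fc f (k : ℤ) ≠ 0 → e ∣ k) → e = 1)
    (hcoprimestar : ∀ e : ℕ, (∀ k : ℕ, 0 < k → fc fstar (k : ℤ) ≠ 0 → e ∣ k) → e = 1) :
    γ = 1 ∧
    ((∀ q : ℚ, ωstar ≠ π * (q : ℝ)) → ω ∈ Ioo (0 : ℝ) π → ωstar ∈ Ioo (0 : ℝ) π →
      ω = ωstar) := by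
  classical
  have hpc : ∀ e : ℕ, (∀ k : ℕ, (0 < k ∧ fc f (k : ℤ) ≠ 0) → e ∣ k) → e = 1 :=
    fun e he => hcoprime e (fun k hk hne => he k ⟨hk, hne⟩)
  have hqc : ∀ e : ℕ, (∀ k : ℕ, (0 < k ∧ fc fstar (k : ℤ) ≠ 0) → e ∣ k) → e = 1 :=
    fun e he => hcoprimestar e (fun k hk hne => he k ⟨hk, hne⟩)
  have hγ' : ∀ i, ((Nat.nth (fun k => 0 < k ∧ fc f (k : ℤ) ≠ 0) i : ℚ)) =
      γ * (Nat.nth (fun k => 0 < k ∧ fc fstar (k : ℤ) ≠ 0) i : ℚ) := by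
    intro i; simpa [kappa] using hγ i
  have hγ1 : γ = 1 := rat_scaling_eq_one _ _ hpc hqc (fun k hk => hk.1) γ hγ'
  refine ⟨hγ1, ?_⟩
  intro hirr hω hωs
  obtain ⟨hω1, hω2⟩ := hω
  obtain ⟨hωs1, hωs2⟩ := hωs
  have hπ := Real.pi_pos
  obtain ⟨hperf, hsumf, hrepf⟩ := hf
  obtain ⟨hperq, hsumq, hrepq⟩ := hfstar
  have hnth : ∀ i, Nat.nth (fun k => 0 < k ∧ fc f (k : ℤ) ≠ 0) i =
      Nat.nth (fun k => 0 < k ∧ fc fstar (k : ℤ) ≠ 0) i := by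
    intro i
    have h2 := hγ' i
    rw [hγ1, one_mul] at h2
    exact_mod_cast h2
  have hpq : ∀ k : ℕ, (0 < k ∧ fc f (k : ℤ) ≠ 0) → (0 < k ∧ fc fstar (k : ℤ) ≠ 0) :=
    pred_imp_of_nth_eq _ _ (fun k hk => hk.1) hnth
  have hqp : ∀ k : ℕ, (0 < k ∧ fc fstar (k : ℤ) ≠ 0) → (0 < k ∧ fc f (k : ℤ) ≠ 0) :=
    pred_imp_of_nth_eq _ _ (fun k hk => hk.1) (fun i => (hnth i).symm)
  have hinj : Function.Injective (fun k : ℕ => (k : ℤ) + 1) := by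
    intro a b hab
    simp only at hab
    omega
  have hsv : Summable (fun k : ℕ => ‖fc f ((k : ℤ) + 1)‖ ^ 2) := hsumf.comp_injective hinj
  have hsw : Summable (fun k : ℕ => ‖fc fstar ((k : ℤ) + 1)‖ ^ 2) := hsumq.comp_injective hinj
  have hv0 : ∀ k : ℕ, (0:ℝ) ≤ ‖fc f ((k : ℤ) + 1)‖ ^ 2 := fun k => by positivity
  have hw0 : ∀ k : ℕ, (0:ℝ) ≤ ‖fc fstar ((k : ℤ) + 1)‖ ^ 2 := fun k => by positivity
  have hmin : 0 < min (ση ^ 2) (σηstar ^ 2) := lt_min (by positivity) (by positivity)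
  -- main induction: all nonzero coefficients agree and frequencies match
  have hstage : ∀ k : ℕ, (0 < k + 1 ∧ fc f ((k + 1 : ℕ) : ℤ) ≠ 0) → (ση ^ 2 = σηstar ^ 2 ∧
      ‖fc f ((k : ℤ) + 1)‖ ^ 2 = ‖fc fstar ((k : ℤ) + 1)‖ ^ 2 ∧
      ∀ ℓ : ℕ, Real.cos ((ℓ : ℝ) * (((k : ℝ) + 1) * ω)) =
        Real.cos ((ℓ : ℝ) * (((k : ℝ) + 1) * ωstar))) := by
    intro k
    induction k using Nat.strong_induction_on with
    | _ k IH =>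
    intro hpk
    have hfne : fc f ((k : ℤ) + 1) ≠ 0 := by
      have h2 := hpk.2
      rwa [show ((k + 1 : ℕ) : ℤ) = (k : ℤ) + 1 by push_cast; ring] at h2
    have hqk := hpq (k + 1) hpk
    have hgne : fc fstar ((k : ℤ) + 1) ≠ 0 := by
      have h2 := hqk.2
      rwa [show ((k + 1 : ℕ) : ℤ) = (k : ℤ) + 1 by push_cast; ring] at h2
    have hA : 0 < ‖fc f ((k : ℤ) + 1)‖ ^ 2 := pow_pos (norm_pos_iff.2 hfne) 2
    have hB : 0 < ‖fc fstar ((k : ℤ) + 1)‖ ^ 2 := pow_pos (norm_pos_iff.2 hgne) 2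
    have hcancel : ∀ ℓ : ℕ,
        (∑ j ∈ Finset.range k, ‖fc f ((j : ℤ) + 1)‖ ^ 2 *
          Real.cos (((j : ℝ) + 1) * (ℓ : ℝ) * ω) *
          Real.exp (-(ℓ : ℝ) * ((j : ℝ) + 1) ^ 2 * ση ^ 2 / 2)) =
        ∑ j ∈ Finset.range k, ‖fc fstar ((j : ℤ) + 1)‖ ^ 2 *
          Real.cos (((j : ℝ) + 1) * (ℓ : ℝ) * ωstar) *
          Real.exp (-(ℓ : ℝ) * ((j : ℝ) + 1) ^ 2 * σηstar ^ 2 / 2) := by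
      intro ℓ
      apply Finset.sum_congr rfl
      intro j hj
      rw [Finset.mem_range] at hj
      by_cases hpj : (0 < j + 1 ∧ fc f ((j + 1 : ℕ) : ℤ) ≠ 0)
      · obtain ⟨hσ, hvw, hcos⟩ := IH j hj hpj
        rw [show ((j : ℝ) + 1) * (ℓ : ℝ) * ω = (ℓ : ℝ) * (((j : ℝ) + 1) * ω) by ring,
          show ((j : ℝ) + 1) * (ℓ : ℝ) * ωstar = (ℓ : ℝ) * (((j : ℝ) + 1) * ωstar) by ring,
          hcos ℓ, hvw, hσ]
      · have hqj : ¬ (0 < j + 1 ∧ fc fstar ((j + 1 : ℕ) : ℤ) ≠ 0) :=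
          fun hq' => hpj (hqp _ hq')
        have hv0' : fc f ((j : ℤ) + 1) = 0 := by
          by_contra hne
          exact hpj ⟨Nat.succ_pos j,
            by rw [show ((j + 1 : ℕ) : ℤ) = (j : ℤ) + 1 by push_cast; ring]; exact hne⟩
        have hw0' : fc fstar ((j : ℤ) + 1) = 0 := by
          by_contra hne
          exact hqj ⟨Nat.succ_pos j,
            by rw [show ((j + 1 : ℕ) : ℤ) = (j : ℤ) + 1 by push_cast; ring]; exact hne⟩
        rw [hv0', hw0']
        simp
    have hCf0 : (0:ℝ) ≤ ∑' j : ℕ, ‖fc f (((j + (k+1) : ℕ) : ℤ) + 1)‖ ^ 2 :=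
      tsum_nonneg (fun j => hv0 _)
    have hCq0 : (0:ℝ) ≤ ∑' j : ℕ, ‖fc fstar (((j + (k+1) : ℕ) : ℤ) + 1)‖ ^ 2 :=
      tsum_nonneg (fun j => hw0 _)
    have hbound : ∀ ℓ : ℕ, 1 ≤ ℓ →
        |‖fc f ((k : ℤ) + 1)‖ ^ 2 * Real.cos ((ℓ : ℝ) * (((k : ℝ) + 1) * ω)) *
            Real.exp (-(ℓ : ℝ) * (((k : ℝ) + 1) ^ 2 * ση ^ 2 / 2)) -
          ‖fc fstar ((k : ℤ) + 1)‖ ^ 2 * Real.cos ((ℓ : ℝ) * (((k : ℝ) + 1) * ωstar)) *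
            Real.exp (-(ℓ : ℝ) * (((k : ℝ) + 1) ^ 2 * σηstar ^ 2 / 2))| ≤
        ((∑' j : ℕ, ‖fc f (((j + (k+1) : ℕ) : ℤ) + 1)‖ ^ 2) +
          (∑' j : ℕ, ‖fc fstar (((j + (k+1) : ℕ) : ℤ) + 1)‖ ^ 2)) *
          Real.exp (-(ℓ : ℝ) * (((k : ℝ) + 2) ^ 2 * min (ση ^ 2) (σηstar ^ 2) / 2)) := by
      intro ℓ hℓ
      have hdf : |(∑' j : ℕ, ‖fc f ((j : ℤ) + 1)‖ ^ 2 *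
            Real.cos (((j : ℝ) + 1) * (ℓ : ℝ) * ω) *
            Real.exp (-(ℓ : ℝ) * ((j : ℝ) + 1) ^ 2 * ση ^ 2 / 2)) -
          ∑ j ∈ Finset.range (k+1), ‖fc f ((j : ℤ) + 1)‖ ^ 2 *
            Real.cos (((j : ℝ) + 1) * (ℓ : ℝ) * ω) *
            Real.exp (-(ℓ : ℝ) * ((j : ℝ) + 1) ^ 2 * ση ^ 2 / 2)| ≤
          (∑' j : ℕ, ‖fc f (((j + (k+1) : ℕ) : ℤ) + 1)‖ ^ 2) *
            Real.exp (-(ℓ : ℝ) * (((k+1 : ℕ) : ℝ) + 1) ^ 2 * ση ^ 2 / 2) :=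
        series_decomp (fun j : ℕ => ‖fc f ((j : ℤ) + 1)‖ ^ 2) hv0 hsv ω ση (k+1) ℓ
      have hdq : |(∑' j : ℕ, ‖fc fstar ((j : ℤ) + 1)‖ ^ 2 *
            Real.cos (((j : ℝ) + 1) * (ℓ : ℝ) * ωstar) *
            Real.exp (-(ℓ : ℝ) * ((j : ℝ) + 1) ^ 2 * σηstar ^ 2 / 2)) -
          ∑ j ∈ Finset.range (k+1), ‖fc fstar ((j : ℤ) + 1)‖ ^ 2 *
            Real.cos (((j : ℝ) + 1) * (ℓ : ℝ) * ωstar) *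
            Real.exp (-(ℓ : ℝ) * ((j : ℝ) + 1) ^ 2 * σηstar ^ 2 / 2)| ≤
          (∑' j : ℕ, ‖fc fstar (((j + (k+1) : ℕ) : ℤ) + 1)‖ ^ 2) *
            Real.exp (-(ℓ : ℝ) * (((k+1 : ℕ) : ℝ) + 1) ^ 2 * σηstar ^ 2 / 2) :=
        series_decomp (fun j : ℕ => ‖fc fstar ((j : ℤ) + 1)‖ ^ 2) hw0 hsw ωstar σηstar (k+1) ℓ
      have hsplitf := Finset.sum_range_succ (fun j : ℕ => ‖fc f ((j : ℤ) + 1)‖ ^ 2 *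
        Real.cos (((j : ℝ) + 1) * (ℓ : ℝ) * ω) *
        Real.exp (-(ℓ : ℝ) * ((j : ℝ) + 1) ^ 2 * ση ^ 2 / 2)) k
      have hsplitq := Finset.sum_range_succ (fun j : ℕ => ‖fc fstar ((j : ℤ) + 1)‖ ^ 2 *
        Real.cos (((j : ℝ) + 1) * (ℓ : ℝ) * ωstar) *
        Real.exp (-(ℓ : ℝ) * ((j : ℝ) + 1) ^ 2 * σηstar ^ 2 / 2)) k
      have hFeq := heq ℓ hℓ
      have hiden : ‖fc f ((k : ℤ) + 1)‖ ^ 2 * Real.cos ((ℓ : ℝ) * (((k : ℝ) + 1) * ω)) *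
            Real.exp (-(ℓ : ℝ) * (((k : ℝ) + 1) ^ 2 * ση ^ 2 / 2)) -
          ‖fc fstar ((k : ℤ) + 1)‖ ^ 2 * Real.cos ((ℓ : ℝ) * (((k : ℝ) + 1) * ωstar)) *
            Real.exp (-(ℓ : ℝ) * (((k : ℝ) + 1) ^ 2 * σηstar ^ 2 / 2)) =
          ((∑' j : ℕ, ‖fc fstar ((j : ℤ) + 1)‖ ^ 2 *
            Real.cos (((j : ℝ) + 1) * (ℓ : ℝ) * ωstar) *
            Real.exp (-(ℓ : ℝ) * ((j : ℝ) + 1) ^ 2 * σηstar ^ 2 / 2)) -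
          ∑ j ∈ Finset.range (k+1), ‖fc fstar ((j : ℤ) + 1)‖ ^ 2 *
            Real.cos (((j : ℝ) + 1) * (ℓ : ℝ) * ωstar) *
            Real.exp (-(ℓ : ℝ) * ((j : ℝ) + 1) ^ 2 * σηstar ^ 2 / 2)) -
          ((∑' j : ℕ, ‖fc f ((j : ℤ) + 1)‖ ^ 2 *
            Real.cos (((j : ℝ) + 1) * (ℓ : ℝ) * ω) *
            Real.exp (-(ℓ : ℝ) * ((j : ℝ) + 1) ^ 2 * ση ^ 2 / 2)) -
          ∑ j ∈ Finset.range (k+1), ‖fc f ((j : ℤ) + 1)‖ ^ 2 *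
            Real.cos (((j : ℝ) + 1) * (ℓ : ℝ) * ω) *
            Real.exp (-(ℓ : ℝ) * ((j : ℝ) + 1) ^ 2 * ση ^ 2 / 2)) := by
        rw [hsplitf, hsplitq, hcancel ℓ, ← hFeq,
          show ((k : ℝ) + 1) * (ℓ : ℝ) * ω = (ℓ : ℝ) * (((k : ℝ) + 1) * ω) by ring,
          show ((k : ℝ) + 1) * (ℓ : ℝ) * ωstar = (ℓ : ℝ) * (((k : ℝ) + 1) * ωstar) by ring,
          show -(ℓ : ℝ) * ((k : ℝ) + 1) ^ 2 * ση ^ 2 / 2 =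
            -(ℓ : ℝ) * (((k : ℝ) + 1) ^ 2 * ση ^ 2 / 2) by ring,
          show -(ℓ : ℝ) * ((k : ℝ) + 1) ^ 2 * σηstar ^ 2 / 2 =
            -(ℓ : ℝ) * (((k : ℝ) + 1) ^ 2 * σηstar ^ 2 / 2) by ring]
        ring
      rw [hiden]
      have hexpf : Real.exp (-(ℓ : ℝ) * (((k+1 : ℕ) : ℝ) + 1) ^ 2 * ση ^ 2 / 2) ≤
          Real.exp (-(ℓ : ℝ) * (((k : ℝ) + 2) ^ 2 * min (ση ^ 2) (σηstar ^ 2) / 2)) := by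
        rw [Real.exp_le_exp]
        push_cast
        have h1 : min (ση ^ 2) (σηstar ^ 2) ≤ ση ^ 2 := min_le_left _ _
        have h2 : (0:ℝ) ≤ (ℓ : ℝ) := Nat.cast_nonneg _
        nlinarith [mul_nonneg (mul_nonneg h2 (sq_nonneg ((k : ℝ) + 2))) (sub_nonneg.2 h1)]
      have hexpq : Real.exp (-(ℓ : ℝ) * (((k+1 : ℕ) : ℝ) + 1) ^ 2 * σηstar ^ 2 / 2) ≤
          Real.exp (-(ℓ : ℝ) * (((k : ℝ) + 2) ^ 2 * min (ση ^ 2) (σηstar ^ 2) / 2)) := by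
        rw [Real.exp_le_exp]
        push_cast
        have h1 : min (ση ^ 2) (σηstar ^ 2) ≤ σηstar ^ 2 := min_le_right _ _
        have h2 : (0:ℝ) ≤ (ℓ : ℝ) := Nat.cast_nonneg _
        nlinarith [mul_nonneg (mul_nonneg h2 (sq_nonneg ((k : ℝ) + 2))) (sub_nonneg.2 h1)]
      refine (abs_sub _ _).trans ?_
      have b1 := hdq.trans (mul_le_mul_of_nonneg_left hexpq hCq0)
      have b2 := hdf.trans (mul_le_mul_of_nonneg_left hexpf hCf0)
      rw [add_mul]
      linarith [b1, b2]
    have hrmin : min (((k : ℝ) + 1) ^ 2 * ση ^ 2 / 2) (((k : ℝ) + 1) ^ 2 * σηstar ^ 2 / 2) <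
        ((k : ℝ) + 2) ^ 2 * min (ση ^ 2) (σηstar ^ 2) / 2 := by
      have hmeq : min (((k : ℝ) + 1) ^ 2 * ση ^ 2 / 2) (((k : ℝ) + 1) ^ 2 * σηstar ^ 2 / 2) =
          ((k : ℝ) + 1) ^ 2 * min (ση ^ 2) (σηstar ^ 2) / 2 := by
        rcases le_total (ση ^ 2) (σηstar ^ 2) with h | h
        · rw [min_eq_left h, min_eq_left (by nlinarith [sq_nonneg ((k : ℝ) + 1)])]
        · rw [min_eq_right h, min_eq_right (by nlinarith [sq_nonneg ((k : ℝ) + 1)])]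
      rw [hmeq]
      have h1 : ((k : ℝ) + 1) ^ 2 < ((k : ℝ) + 2) ^ 2 := by
        nlinarith [Nat.cast_nonneg (α := ℝ) k]
      nlinarith [hmin]
    obtain ⟨hs, hvw, hcos⟩ := key_identification hA hB hrmin hbound
    have hσeq : ση ^ 2 = σηstar ^ 2 := by
      have hk2 : ((k : ℝ) + 1) ^ 2 ≠ 0 := by positivity
      have h0 : ((k : ℝ) + 1) ^ 2 * (ση ^ 2 - σηstar ^ 2) = 0 := by linarith
      have := (mul_eq_zero.1 h0).resolve_left hk2
      linarith
    exact ⟨hσeq, hvw, hcos⟩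
  -- number theory
  have hpne : ∃ k : ℕ, (0 < k ∧ fc f (k : ℤ) ≠ 0) := by
    by_contra h
    exact absurd (hpc 0 (fun k hk => (h ⟨k, hk⟩).elim)) (by norm_num)
  have hSex : ∃ k : ℕ, (0 < k ∧ fc f (k : ℤ) ≠ 0) ∧ 0 < k := by
    obtain ⟨k, hk⟩ := hpne
    exact ⟨k, hk, hk.1⟩
  have hcos1 : ∀ n : ℕ, (0 < n ∧ fc f (n : ℤ) ≠ 0) →
      Real.cos ((n : ℝ) * ω) = Real.cos ((n : ℝ) * ωstar) := by
    intro n hn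
    obtain ⟨k, rfl⟩ : ∃ k, n = k + 1 := ⟨n - 1, by have := hn.1; omega⟩
    have h2 := (hstage k hn).2.2 1
    push_cast at h2 ⊢
    simpa using h2
  have hPQ : ∀ n : ℕ, (0 < n ∧ fc f (n : ℤ) ≠ 0) →
      (∃ m : ℤ, (n : ℝ) * (ω - ωstar) = (m : ℝ) * (2 * π)) ∨
      (∃ m : ℤ, (n : ℝ) * (ω + ωstar) = (m : ℝ) * (2 * π)) := by
    intro n hn
    rcases Real.cos_eq_cos_iff.1 (hcos1 n hn) with ⟨m, hm | hm⟩
    · left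
      refine ⟨-m, ?_⟩
      push_cast
      linear_combination -hm
    · right
      refine ⟨m, ?_⟩
      push_cast
      linear_combination hm
  by_cases hall : ∀ n : ℕ, (0 < n ∧ fc f (n : ℤ) ≠ 0) →
      ∃ m : ℤ, (n : ℝ) * (ω - ωstar) = (m : ℝ) * (2 * π)
  · obtain ⟨m, hm⟩ := exists_eq_two_pi_int _ (ω - ωstar) hSex hpc hall
    have hm0 : m = 0 := by
      by_contra hm0
      have h1 : (1:ℝ) ≤ |(m:ℝ)| := by
        have := Int.one_le_abs (by omega : m ≠ 0)
        calc (1:ℝ) = ((1:ℤ):ℝ) := by norm_num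
          _ ≤ ((|m|:ℤ):ℝ) := by exact_mod_cast this
          _ = |(m:ℝ)| := by push_cast; ring
      have h2 : |ω - ωstar| < π := by
        rw [abs_sub_lt_iff]
        constructor <;> linarith
      rw [hm] at h2
      rw [abs_mul] at h2
      have h3 : |(2:ℝ) * π| = 2 * π := abs_of_pos (by linarith)
      rw [h3] at h2
      nlinarith
    rw [hm0] at hm
    norm_num at hm
    linarith
  · push_neg at hall
    obtain ⟨n₁, hn₁p, hn₁not⟩ := hall
    have hQ1 : ∃ m : ℤ, (n₁ : ℝ) * (ω + ωstar) = (m : ℝ) * (2 * π) :=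
      (hPQ n₁ hn₁p).resolve_left (by
        intro ⟨m, hm⟩
        exact hn₁not m hm)
    have hallQ : ∀ n : ℕ, (0 < n ∧ fc f (n : ℤ) ≠ 0) →
        ∃ m : ℤ, (n : ℝ) * (ω + ωstar) = (m : ℝ) * (2 * π) := by
      intro n hn
      rcases hPQ n hn with hP | hQ
      · exfalso
        obtain ⟨m, hm⟩ := hP
        obtain ⟨m₁, hm₁⟩ := hQ1
        have hn0 : 0 < n := hn.1
        have hn₁0 : 0 < n₁ := hn₁p.1
        have hn0' : (0:ℝ) < (n : ℝ) := by exact_mod_cast hn0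
        have hn₁0' : (0:ℝ) < (n₁ : ℝ) := by exact_mod_cast hn₁0
        have hnn : ((n:ℝ) * (n₁:ℝ)) ≠ 0 := by positivity
        apply hirr (((m₁ * n - m * n₁ : ℤ) : ℚ) / ((n * n₁ : ℕ) : ℚ))
        have hcast : ((((m₁ * n - m * n₁ : ℤ) : ℚ) / ((n * n₁ : ℕ) : ℚ) : ℚ) : ℝ) =
            ((m₁:ℝ) * (n:ℝ) - (m:ℝ) * (n₁:ℝ)) / ((n:ℝ) * (n₁:ℝ)) := by
          push_cast
          ring
        rw [hcast, ← mul_div_assoc, eq_div_iff hnn]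
        linear_combination ((n:ℝ)/2) * hm₁ - ((n₁:ℝ)/2) * hm
      · exact hQ
    obtain ⟨m, hm⟩ := exists_eq_two_pi_int _ (ω + ωstar) hSex hpc hallQ
    exfalso
    rcases le_or_gt m 0 with hm0 | hm0
    · have : ((m:ℝ)) ≤ 0 := by exact_mod_cast hm0
      nlinarith
    · have : (1:ℝ) ≤ (m:ℝ) := by exact_mod_cast hm0
      nlinarith
end
end

section
/- Let f, f⋆ ∈ F with c_0(f) = c_0(f⋆), let {κ_i}_{i∈ℕ₊} := {κ_i(f)} = {κ_i(f⋆)} coincide and be setwise coprime, and suppose |c_{κ_i}(f)| = |c_{κ_i}(f⋆)| ≠ 0 for all i. Writing d_{k₁,…,k_p} := c_{−(k₁+⋯+k_p)}(f)·c_{k₁}(f)⋯c_{k_p}(f) and d⋆_{k₁,…,k_p} := c_{−(k₁+⋯+k_p)}(f⋆)·c_{k₁}(f⋆)⋯c_{k_p}(f⋆), assume d_{k₁,…,k_p} = d⋆_{k₁,…,k_p} for all p ≥ 1 and all (k₁,…,k_p) ∈ ℤ^p. Then there exists θ ∈ [0,2π) such that c_{−k}(f) = c_{−k}(f⋆) e^{−ikθ}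 for all k ∈ ℤ, i.e. f(x−θ) = f⋆(x) for all x ∈ ℝ. -/
open Real Set

noncomputable section

lemma interval_integral_conj {g : ℝ → ℂ} {a b : ℝ} :
    (∫ x in a..b, (starRingEnd ℂ) (g x)) = (starRingEnd ℂ) (∫ x in a..b, g x) := by
  simp only [intervalIntegral, ← integral_conj, map_sub]

lemma fc_neg (f : ℝ → ℝ) (k : ℤ) : fc f (-k) = (starRingEnd ℂ) (fc f k) := by
  unfold fc
  rw [map_mul, ← interval_integral_conj]
  congr 1
  · rw [map_div₀, map_one, map_mul, Complex.conj_ofReal, map_ofNat]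
  · refine intervalIntegral.integral_congr fun x _ => ?_
    rw [map_mul, Complex.conj_ofReal, ← Complex.exp_conj]
    congr 1
    simp only [map_mul, map_neg, Complex.conj_I, Complex.conj_ofReal, map_intCast]
    push_cast
    ring

lemma prod_map_finsetSum {ι α β : Type*} [CommMonoid β] (B : Finset ι) (F : ι → Multiset α)
    (g : α → β) : ((∑ i ∈ B, F i).map g).prod = ∏ i ∈ B, ((F i).map g).prod := by
  induction B using Finset.cons_induction with
  | empty => simp
  | cons a s h ih => simp [Finset.sum_cons, Finset.prod_cons, Multiset.prod_add, ih]

/-- If `f, f⋆ ∈ F` have `c_0(f) = c_0(f⋆)`, coinciding setwise coprime families of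
positive indices with nonzero coefficients, equal moduli of the corresponding
coefficients, and equal products
`d_{k₁,…,k_p} = c_{−(k₁+⋯+k_p)} c_{k₁} ⋯ c_{k_p}` for all `p ≥ 1` and all
`(k₁,…,k_p) ∈ ℤ^p`, then there exists `θ ∈ [0,2π)` with
`c_{−k}(f) = c_{−k}(f⋆) e^{−ikθ}` for all `k`, i.e. `f(x−θ) = f⋆(x)` for all `x`. -/
theorem phase_shift_identification
    (f fstar : ℝ → ℝ) (hf : IsOscPattern f) (hfstar : IsOscPattern fstar)
    (hc0 : fc f 0 = fc fstar 0)
    (hsupp : ∀ k : ℕ, 0 < k → (fc f (k : ℤ) ≠ 0 ↔ fc fstar (k : ℤ) ≠ 0))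
    (hcoprime : ∀ e : ℕ, (∀ k : ℕ, 0 < k → fc f (k : ℤ) ≠ 0 → e ∣ k) → e = 1)
    (hmod : ∀ k : ℕ, 0 < k → fc f (k : ℤ) ≠ 0 → ‖fc f (k : ℤ)‖ = ‖fc fstar (k : ℤ)‖)
    (hd : ∀ p : ℕ, 1 ≤ p → ∀ k : Fin p → ℤ,
      fc f (-(∑ j : Fin p, k j)) * ∏ j : Fin p, fc f (k j) =
      fc fstar (-(∑ j : Fin p, k j)) * ∏ j : Fin p, fc fstar (k j)) :
    ∃ θ : ℝ, θ ∈ Ico (0 : ℝ) (2 * π) ∧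
      (∀ k : ℤ, fc f (-k) = fc fstar (-k) * Complex.exp (-Complex.I * (k : ℂ) * (θ : ℂ))) ∧
      ∀ x : ℝ, f (x - θ) = fstar x := by
  classical
  -- ℤ-indexed versions of the hypotheses
  have hsuppZ : ∀ k : ℤ, 0 < k → (fc f k ≠ 0 ↔ fc fstar k ≠ 0) := by
    intro k hk
    have h1 : ((k.toNat : ℕ) : ℤ) = k := Int.toNat_of_nonneg hk.le
    have := hsupp k.toNat (by omega)
    rwa [h1] at this
  have hmodZ : ∀ k : ℤ, 0 < k → fc f k ≠ 0 → ‖fc f k‖ = ‖fc fstar k‖ := by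
    intro k hk
    have h1 : ((k.toNat : ℕ) : ℤ) = k := Int.toNat_of_nonneg hk.le
    have := hmod k.toNat (by omega)
    rwa [h1] at this
  set S : Set ℤ := {k : ℤ | 0 < k ∧ fc f k ≠ 0} with hSdef
  set u : ℤ → ℂ := fun k => fc f k / fc fstar k with hudef
  have hustar : ∀ k ∈ S, fc fstar k ≠ 0 := fun k hk => (hsuppZ k hk.1).mp hk.2
  have hune : ∀ k ∈ S, u k ≠ 0 := fun k hk => div_ne_zero hk.2 (hustar k hk)
  have hunorm : ∀ k ∈ S, ‖u k‖ = 1 := by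
    intro k hk
    rw [hudef]
    simp only [norm_div]
    rw [hmodZ k hk.1 hk.2, div_self (by simpa using hustar k hk)]
  have huconj : ∀ k ∈ S, (starRingEnd ℂ) (u k) = (u k)⁻¹ :=
    fun k hk => (Complex.inv_eq_conj (hunorm k hk)).symm
  have hufc : ∀ k ∈ S, fc f k = u k * fc fstar k := by
    intro k hk
    show fc f k = fc f k / fc fstar k * fc fstar k
    rw [div_mul_cancel₀ _ (hustar k hk)]
  -- multiset version of hd
  have hdM : ∀ M : Multiset ℤ, M ≠ 0 →
      fc f (-M.sum) * (M.map (fc f)).prod = fc fstar (-M.sum) * (M.map (fc fstar)).prod := by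
    intro M hM
    obtain ⟨l, rfl⟩ : ∃ l : List ℤ, M = ↑l := ⟨M.toList, (Multiset.coe_toList M).symm⟩
    have hl : 1 ≤ l.length := by
      rcases l with _ | _
      · simp at hM
      · simp
    have := hd l.length hl (fun j => l.get j)
    simpa using this
  -- the core multiplicative lemma
  have hcore : ∀ (B : Finset ℤ) (a : ℤ → ℤ), (∀ i ∈ B, i ∈ S) →
      ∀ s : ℤ, s ∈ S → s = ∑ i ∈ B, a i * i → (∏ i ∈ B, u i ^ a i) = u s := by
    intro B a hB s hs hsum
    set F : ℤ → Multiset ℤ :=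
      fun i => Multiset.replicate (a i).toNat i + Multiset.replicate (-(a i)).toNat (-i) with hF
    set M : Multiset ℤ := ∑ i ∈ B, F i with hM
    have hMsum : M.sum = s := by
      rw [hM, Multiset.sum_sum, hsum]
      refine Finset.sum_congr rfl fun i _ => ?_
      rw [hF]
      simp only [Multiset.sum_add, Multiset.sum_replicate, nsmul_eq_mul]
      have h := Int.toNat_sub_toNat_neg (a i)
      calc ((a i).toNat : ℤ) * i + ((-(a i)).toNat : ℤ) * (-i)
          = (((a i).toNat : ℤ) - ((-(a i)).toNat : ℤ)) * i := by ring
        _ = a i * i := by rw [h]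
    have hMne : M ≠ 0 := by
      intro h
      rw [h, Multiset.sum_zero] at hMsum
      exact absurd hMsum.symm (by exact_mod_cast hs.1.ne')
    have hE := hdM M hMne
    rw [hMsum] at hE
    have hmap : ∀ g : ℝ → ℝ, (M.map (fc g)).prod
        = ∏ i ∈ B, (fc g i ^ (a i).toNat * fc g (-i) ^ (-(a i)).toNat) := by
      intro g
      rw [hM, prod_map_finsetSum]
      refine Finset.prod_congr rfl fun i _ => ?_
      rw [hF]
      simp [Multiset.prod_add]
    have hL : fc f (-s) = (u s)⁻¹ * fc fstar (-s) := by
      rw [fc_neg f s, fc_neg fstar s, hufc s hs, map_mul, huconj s hs]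
    have hterm : ∀ i ∈ B, fc f i ^ (a i).toNat * fc f (-i) ^ (-(a i)).toNat
        = (u i ^ (a i).toNat * ((u i)⁻¹) ^ (-(a i)).toNat)
          * (fc fstar i ^ (a i).toNat * fc fstar (-i) ^ (-(a i)).toNat) := by
      intro i hi
      rw [fc_neg f i, fc_neg fstar i, hufc i (hB i hi), map_mul, huconj i (hB i hi),
        mul_pow, mul_pow]
      ring
    rw [hmap f, hmap fstar, hL, Finset.prod_congr rfl hterm, Finset.prod_mul_distrib] at hE
    set W : ℂ := ∏ i ∈ B, u i ^ (a i).toNat * ((u i)⁻¹) ^ (-(a i)).toNat with hWdef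
    set R : ℂ := ∏ i ∈ B, fc fstar i ^ (a i).toNat * fc fstar (-i) ^ (-(a i)).toNat with hRdef
    have hRne : R ≠ 0 := by
      rw [hRdef]
      refine Finset.prod_ne_zero_iff.mpr fun i hi => mul_ne_zero (pow_ne_zero _ (hustar i (hB i hi)))
        (pow_ne_zero _ ?_)
      rw [fc_neg]
      simpa using hustar i (hB i hi)
    have hsne : fc fstar (-s) ≠ 0 := by
      rw [fc_neg]
      simpa using hustar s hs
    have h1 : ((u s)⁻¹ * W) * (fc fstar (-s) * R) = 1 * (fc fstar (-s) * R) := by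
      rw [one_mul]
      calc ((u s)⁻¹ * W) * (fc fstar (-s) * R) = (u s)⁻¹ * fc fstar (-s) * (W * R) := by ring
        _ = fc fstar (-s) * R := hE
    have h2 : (u s)⁻¹ * W = 1 := mul_right_cancel₀ (mul_ne_zero hsne hRne) h1
    have h3 : W = u s := by
      rw [inv_mul_eq_one₀ (hune s hs)] at h2
      exact h2.symm
    rw [← h3, hWdef]
    refine Finset.prod_congr rfl fun i hi => ?_
    have hui := hune i (hB i hi)
    rw [inv_pow, ← zpow_natCast (u i) (a i).toNat, ← zpow_natCast (u i) (-(a i)).toNat,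
      ← zpow_neg, ← zpow_add₀ hui]
    congr 1
    omega
  -- Bezout
  have h1mem : (1 : ℤ) ∈ Submodule.span ℤ S := by
    have hgd : ∀ k : ℕ, 0 < k → fc f (k : ℤ) ≠ 0 →
        (Submodule.IsPrincipal.generator (Ideal.span S)).natAbs ∣ k := by
      intro k hk hne
      have hkS : (k : ℤ) ∈ S := ⟨by exact_mod_cast hk, hne⟩
      have hmem : (k : ℤ) ∈ Ideal.span S := Ideal.subset_span hkS
      have hdvd := (Submodule.IsPrincipal.mem_iff_generator_dvd (Ideal.span S)).mp hmem
      have := Int.natAbs_dvd_natAbs.mpr hdvd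
      simpa using this
    have hg1 := hcoprime _ hgd
    have hunit : IsUnit (Submodule.IsPrincipal.generator (Ideal.span S)) :=
      Int.isUnit_iff_natAbs_eq.mpr hg1
    have htop : Ideal.span S = ⊤ := by
      rw [← Ideal.span_singleton_generator (Ideal.span S)]
      exact Ideal.span_singleton_eq_top.mpr hunit
    have : (1 : ℤ) ∈ Ideal.span S := htop ▸ Submodule.mem_top
    exact this
  obtain ⟨c, hcsupp, hcsum⟩ := Submodule.mem_span_set.mp h1mem
  set ζ : ℂ := ∏ i ∈ c.support, u i ^ c i with hζdef
  have hBsub : ∀ i ∈ c.support, i ∈ S := fun i hi => hcsupp hi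
  have hζpow : ∀ k ∈ S, u k = ζ ^ k := by
    intro k hk
    have hsum : k = ∑ i ∈ c.support, (k * c i) * i := by
      have h0 : (c.sum fun i r => r • i) = ∑ i ∈ c.support, c i * i := by
        rw [Finsupp.sum]
        exact Finset.sum_congr rfl fun i _ => smul_eq_mul _ _
      calc k = k * 1 := (mul_one k).symm
        _ = k * ∑ i ∈ c.support, c i * i := by rw [← h0, hcsum]
        _ = ∑ i ∈ c.support, (k * c i) * i := by rw [Finset.mul_sum]; exact Finset.sum_congr rfl fun i _ => by ring
    have := hcore c.support (fun i => k * c i) hBsub k hk hsum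
    rw [← this, hζdef, ← Finset.prod_zpow]
    refine Finset.prod_congr rfl fun i hi => ?_
    rw [← zpow_mul]
    congr 1
    ring
  have hζnorm : ‖ζ‖ = 1 := by
    rw [hζdef, norm_prod]
    refine Finset.prod_eq_one fun i hi => ?_
    rw [norm_zpow, hunorm i (hBsub i hi), one_zpow]
  -- define θ
  set θ₀ := Complex.arg ζ with hθ₀
  set θ : ℝ := if 0 ≤ θ₀ then θ₀ else θ₀ + 2 * π with hθdef
  have hζexp : ζ = Complex.exp (θ * Complex.I) := by
    have habs := Complex.norm_mul_exp_arg_mul_I ζ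
    rw [hζnorm] at habs
    rw [Complex.ofReal_one, one_mul] at habs
    rw [hθdef]
    by_cases h : 0 ≤ θ₀
    · rw [if_pos h, ← habs]
    · rw [if_neg h, ← habs]
      push_cast
      rw [add_mul, Complex.exp_add]
      rw [show ((2 : ℂ) * π * Complex.I) = 2 * π * Complex.I from rfl] at *
      rw [Complex.exp_two_pi_mul_I, mul_one]
  have hθmem : θ ∈ Ico (0 : ℝ) (2 * π) := by
    have h1 := Complex.arg_le_pi ζ
    have h2 := Complex.neg_pi_lt_arg ζ
    have h3 := Real.pi_pos
    rw [hθdef]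
    by_cases h : 0 ≤ θ₀
    · rw [if_pos h]
      exact ⟨h, by rw [hθ₀] at *; linarith⟩
    · rw [if_neg h]
      push_neg at h
      constructor
      · rw [hθ₀] at *; linarith
      · rw [hθ₀] at *; linarith
  -- the coefficient identity for positive k
  have hpos : ∀ k : ℤ, 0 < k → fc f k = fc fstar k * Complex.exp (Complex.I * (k : ℂ) * (θ : ℂ)) := by
    intro k hk
    by_cases hne : fc f k = 0
    · have h0 : fc fstar k = 0 := by
        by_contra h
        exact (hsuppZ k hk).mpr h hne
      rw [hne, h0, zero_mul]
    · have hkS : k ∈ S := ⟨hk, hne⟩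
      have h1 := hζpow k hkS
      have h2 : ζ ^ k = Complex.exp (Complex.I * (k : ℂ) * (θ : ℂ)) := by
        rw [hζexp, ← Complex.exp_int_mul]
        congr 1
        ring
      rw [hufc k hkS, h1, h2]
      ring
  -- the coefficient identity for all k
  have hcoef : ∀ k : ℤ, fc f (-k) = fc fstar (-k) * Complex.exp (-Complex.I * (k : ℂ) * (θ : ℂ)) := by
    intro k
    rcases lt_trichotomy k 0 with hk | hk | hk
    · have h1 := hpos (-k) (by omega)
      rw [h1]
      congr 2
      push_cast
      ring
    · subst hk
      simp [hc0]
    · rw [fc_neg f k, fc_neg fstar k, hpos k hk, map_mul]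
      congr 1
      rw [← Complex.exp_conj]
      congr 1
      simp only [map_mul, Complex.conj_I, Complex.conj_ofReal, map_intCast]
  refine ⟨θ, hθmem, hcoef, fun x => ?_⟩
  have hfx := hf.2.2 (x - θ)
  have hgx := hfstar.2.2 x
  have key : ((f (x - θ) : ℝ) : ℂ) = ((fstar x : ℝ) : ℂ) := by
    rw [hfx, hgx]
    refine tsum_congr fun k => ?_
    have h1 := hcoef (-k)
    rw [neg_neg] at h1
    rw [h1, mul_assoc, ← Complex.exp_add]
    congr 2
    push_cast
    ring
  exact_mod_cast key
end
end

section
/- Let f ∈ F be a non-constant 2π-periodic function and define ν(f) := max{j ∈ ℕ₊ : c_k(f) = 0 for all k ∈ ℤ not divisible by j}. Then ν(f) is finite, the function x ↦ f(x/ν(f)) is 2π-periodic with Fourier coefficients c_ℓ = c_{ℓ·ν(f)}(f), hence repl(f) ≥ ν(f), and the family {κ_i(f̄)}_{i∈ℕ₊} for f̄(x) := f(x/ν(f)) is setwise coprime. -/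
open Real Set

noncomputable section

/-- `repl f = sup { r : ℝ | x ↦ f(x/r) is 2π-periodic }`. -/
def repl (f : ℝ → ℝ) : ℝ :=
  sSup {r : ℝ | ∀ x : ℝ, f ((x + 2 * π) / r) = f (x / r)}

/-- `nuF f = max { j ∈ ℕ₊ | c_k(f) = 0 for all k ∈ ℤ not divisible by j }`. -/
def nuF (f : ℝ → ℝ) : ℕ :=
  sSup {j : ℕ | 0 < j ∧ ∀ k : ℤ, ¬ ((j : ℤ) ∣ k) → fc f k = 0}

open MeasureTheory

/-- A periodic function integrable on one period is integrable on every interval. -/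
lemma periodic_intervalIntegrable_aux {h : ℝ → ℂ} {T : ℝ} (hp : Function.Periodic h T)
    (hT : 0 < T) {c : ℝ} (hi : IntervalIntegrable h volume c (c + T)) :
    ∀ a b : ℝ, IntervalIntegrable h volume a b := by
  have hshift : ∀ n : ℤ, IntervalIntegrable h volume (c + n * T) (c + n * T + T) := by
    intro n
    have h1 := hi.comp_add_right (-(n * T))
    have h2 : (fun x => h (x + -(n * T))) = h := by
      funext x
      have := (hp.int_mul (-n)) x
      simpa [neg_mul] using this
    rw [h2] at h1
    convert h1 using 1 <;> push_cast <;> ring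
  have hnat : ∀ n : ℕ, IntervalIntegrable h volume (c - n * T) (c + n * T) := by
    intro n
    induction n with
    | zero => simp
    | succ m ih =>
      have left : IntervalIntegrable h volume (c - (m + 1 : ℕ) * T) (c - m * T) := by
        have := hshift (-(m + 1))
        convert this using 1 <;> push_cast <;> ring
      have right : IntervalIntegrable h volume (c + m * T) (c + (m + 1 : ℕ) * T) := by
        have := hshift m
        convert this using 1 <;> push_cast <;> ring
      exact (left.trans ih).trans right
  intro a b
  obtain ⟨n, hn⟩ := exists_nat_gt ((|a - c| + |b - c|) / T)
  have hn' : |a - c| + |b - c| < n * T := by rwa [div_lt_iff₀ hT] at hn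
  have ha : |a - c| < n * T := by linarith [abs_nonneg (b - c)]
  have hb : |b - c| < n * T := by linarith [abs_nonneg (a - c)]
  rw [abs_lt] at ha hb
  apply (hnat n).mono_set
  apply Set.uIcc_subset_uIcc
  · rw [Set.mem_uIcc]; left; constructor <;> linarith [ha.1, ha.2]
  · rw [Set.mem_uIcc]; left; constructor <;> linarith [hb.1, hb.2]

/-- If `f` is `2π`-periodic and additionally has period `t`, then
`c_k(f) = e^{ikt} c_k(f)`. -/
lemma fc_shift (f : ℝ → ℝ) (hper : ∀ x : ℝ, f (x + 2 * π) = f x) (k : ℤ) (t : ℝ)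
    (ht : ∀ x : ℝ, f (x + t) = f x) :
    fc f k = Complex.exp (Complex.I * (k : ℂ) * (t : ℂ)) * fc f k := by
  set H : ℝ → ℂ := fun x => (f x : ℂ) * Complex.exp (-Complex.I * (k : ℂ) * (x : ℂ)) with hH
  have HP : Function.Periodic H (2 * π) := by
    intro x
    simp only [hH]
    rw [hper x]
    congr 1
    rw [show -Complex.I * (k : ℂ) * ((x + 2 * π : ℝ) : ℂ)
        = -Complex.I * (k : ℂ) * (x : ℂ) + ((-k : ℤ) : ℂ) * (2 * (π : ℂ) * Complex.I) by
      push_cast; ring]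
    rw [Complex.exp_add, Complex.exp_int_mul_two_pi_mul_I, mul_one]
  have e1 : H = fun x => Complex.exp (Complex.I * (k : ℂ) * (t : ℂ)) * H (x + t) := by
    funext x
    simp only [hH]
    rw [← ht x]
    have hx : Complex.exp (Complex.I * (k : ℂ) * (t : ℂ))
        * Complex.exp (-Complex.I * (k : ℂ) * ((x + t : ℝ) : ℂ))
        = Complex.exp (-Complex.I * (k : ℂ) * (x : ℂ)) := by
      rw [← Complex.exp_add]
      congr 1
      push_cast
      ring
    rw [← hx]
    ring
  have key : (∫ x in (-π : ℝ)..π, H x)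
      = Complex.exp (Complex.I * (k : ℂ) * (t : ℂ)) * ∫ x in (-π : ℝ)..π, H x := by
    conv_lhs => rw [e1]
    rw [intervalIntegral.integral_const_mul]
    congr 1
    have e3 : (∫ x in (-π : ℝ)..π, H (x + t)) = ∫ x in (-π + t : ℝ)..(π + t : ℝ), H x :=
      intervalIntegral.integral_comp_add_right H t
    rw [e3]
    have e2 := HP.intervalIntegral_add_eq (-π + t) (-π)
    rw [show -π + t + 2 * π = π + t by ring, show -π + 2 * π = π by ring] at e2
    exact e2
  show (1 / (2 * (π : ℂ))) * ∫ x in (-π : ℝ)..π, H x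
      = Complex.exp (Complex.I * (k : ℂ) * (t : ℂ))
        * ((1 / (2 * (π : ℂ))) * ∫ x in (-π : ℝ)..π, H x)
  conv_lhs => rw [key]
  ring

/-- For a non-constant `f ∈ F`: `ν(f)` is well defined (the defining set is nonempty and
bounded, hence the maximum is attained and positive), `x ↦ f(x/ν(f))` is 2π-periodic with
Fourier coefficients `c_ℓ = c_{ℓ·ν(f)}(f)`, hence `repl(f) ≥ ν(f)`, and the family of
positive indices with nonzero coefficient of `f̄(x) := f(x/ν(f))` is setwise coprime. -/
theorem nu_well_defined_and_coprime
    (f : ℝ → ℝ) (hf : IsOscPattern f) (hnonconst : ∃ x y : ℝ, f x ≠ f y) :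
    ({j : ℕ | 0 < j ∧ ∀ k : ℤ, ¬ ((j : ℤ) ∣ k) → fc f k = 0}).Nonempty ∧
    BddAbove {j : ℕ | 0 < j ∧ ∀ k : ℤ, ¬ ((j : ℤ) ∣ k) → fc f k = 0} ∧
    0 < nuF f ∧
    (∀ k : ℤ, ¬ ((nuF f : ℤ) ∣ k) → fc f k = 0) ∧
    (∀ x : ℝ, f ((x + 2 * π) / (nuF f : ℝ)) = f (x / (nuF f : ℝ))) ∧
    (∀ l : ℤ, fc (fun x => f (x / (nuF f : ℝ))) l = fc f (l * (nuF f : ℤ))) ∧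
    (nuF f : ℝ) ≤ repl f ∧
    (∀ e : ℕ,
      (∀ k : ℕ, 0 < k → fc (fun x => f (x / (nuF f : ℝ))) (k : ℤ) ≠ 0 → e ∣ k) →
      e = 1) := by
  -- existence of a nonzero coefficient away from 0
  obtain ⟨k0, hk0ne, hk0⟩ : ∃ k : ℤ, k ≠ 0 ∧ fc f k ≠ 0 := by
    by_contra h
    push_neg at h
    obtain ⟨a, b, hab⟩ := hnonconst
    have key : ∀ x : ℝ, (f x : ℂ) = fc f 0 := by
      intro x
      rw [hf.2.2 x, tsum_eq_single 0 (fun k hk => by simp [h k hk])]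
      simp
    exact hab (Complex.ofReal_injective ((key a).trans (key b).symm))
  -- the defining set of `nuF`
  have h1 : ({j : ℕ | 0 < j ∧ ∀ k : ℤ, ¬ ((j : ℤ) ∣ k) → fc f k = 0}).Nonempty :=
    ⟨1, one_pos, fun k hk => absurd (one_dvd k) (by exact_mod_cast hk)⟩
  have h2 : BddAbove {j : ℕ | 0 < j ∧ ∀ k : ℤ, ¬ ((j : ℤ) ∣ k) → fc f k = 0} := by
    refine ⟨k0.natAbs, fun j hj => ?_⟩
    have hd : (j : ℤ) ∣ k0 := by
      by_contra hd
      exact hk0 (hj.2 k0 hd)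
    have hd' : j ∣ k0.natAbs := by
      have := Int.natAbs_dvd_natAbs.mpr hd
      simpa using this
    exact Nat.le_of_dvd (Int.natAbs_pos.mpr hk0ne) hd'
  have hmem := Nat.sSup_mem h1 h2
  have hpos : 0 < nuF f := hmem.1
  have hdvd : ∀ k : ℤ, ¬ ((nuF f : ℤ) ∣ k) → fc f k = 0 := hmem.2
  have hνR : ((nuF f : ℕ) : ℝ) ≠ 0 := Nat.cast_ne_zero.mpr hpos.ne'
  have hνC : ((nuF f : ℕ) : ℂ) ≠ 0 := Nat.cast_ne_zero.mpr hpos.ne'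
  -- period 2π/ν
  have hperT : ∀ y : ℝ, f (y + 2 * π / (nuF f : ℝ)) = f y := by
    intro y
    have key : (f (y + 2 * π / (nuF f : ℝ)) : ℂ) = (f y : ℂ) := by
      rw [hf.2.2 (y + 2 * π / (nuF f : ℝ)), hf.2.2 y]
      apply tsum_congr
      intro k
      by_cases hc : fc f k = 0
      · simp [hc]
      · have hdk : (nuF f : ℤ) ∣ k := by
          by_contra hdk
          exact hc (hdvd k hdk)
        obtain ⟨m, rfl⟩ := hdk
        congr 1
        rw [show Complex.I * (((nuF f : ℤ) * m : ℤ) : ℂ) * ((y + 2 * π / (nuF f : ℝ) : ℝ) : ℂ)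
            = Complex.I * (((nuF f : ℤ) * m : ℤ) : ℂ) * (y : ℂ)
              + (m : ℂ) * (2 * (π : ℂ) * Complex.I) by
          push_cast
          field_simp]
        rw [Complex.exp_add, Complex.exp_int_mul_two_pi_mul_I, mul_one]
    exact Complex.ofReal_injective key
  have part5 : ∀ x : ℝ, f ((x + 2 * π) / (nuF f : ℝ)) = f (x / (nuF f : ℝ)) := by
    intro x
    rw [add_div]
    exact hperT (x / (nuF f : ℝ))
  -- integrability of f
  have hint0 : IntervalIntegrable
      (fun x : ℝ => (f x : ℂ) * Complex.exp (-Complex.I * (k0 : ℂ) * (x : ℂ)))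
      volume (-π) π := by
    by_contra h
    apply hk0
    unfold fc
    rw [intervalIntegral.integral_undef h, mul_zero]
  have hintf1 : IntervalIntegrable (fun x : ℝ => (f x : ℂ)) volume (-π) π := by
    have e : (fun x : ℝ => (f x : ℂ))
        = fun x : ℝ => ((f x : ℂ) * Complex.exp (-Complex.I * (k0 : ℂ) * (x : ℂ)))
            * Complex.exp (Complex.I * (k0 : ℂ) * (x : ℂ)) := by
      funext x
      rw [mul_assoc, ← Complex.exp_add,
        show -Complex.I * (k0 : ℂ) * (x : ℂ) + Complex.I * (k0 : ℂ) * (x : ℂ) = 0 by ring,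
        Complex.exp_zero, mul_one]
    rw [e]
    exact hint0.mul_continuousOn
      ((continuous_const.mul Complex.continuous_ofReal).cexp.continuousOn)
  have hperC : Function.Periodic (fun x : ℝ => (f x : ℂ)) (2 * π) := by
    intro x
    exact congrArg _ (hf.1 x)
  have hintf : ∀ a b : ℝ, IntervalIntegrable (fun x : ℝ => (f x : ℂ)) volume a b := by
    apply periodic_intervalIntegrable_aux hperC (by positivity) (c := -π)
    rw [show (-π + 2 * π : ℝ) = π by ring]
    exact hintf1
  have hintc : ∀ (c : ℂ) (a b : ℝ),
      IntervalIntegrable (fun x : ℝ => (f x : ℂ) * Complex.exp (c * (x : ℂ))) volume a b :=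
    fun c a b => (hintf a b).mul_continuousOn
      ((continuous_const.mul Complex.continuous_ofReal).cexp.continuousOn)
  -- the coefficients of f(x/ν)
  have part6 : ∀ l : ℤ, fc (fun x => f (x / (nuF f : ℝ))) l = fc f (l * (nuF f : ℤ)) := by
    intro l
    set F : ℝ → ℂ :=
      fun y => (f y : ℂ) * Complex.exp (-Complex.I * (l : ℂ) * ((nuF f : ℕ) : ℂ) * (y : ℂ))
      with hF
    have hFper : Function.Periodic F (2 * π / (nuF f : ℝ)) := by
      intro y
      simp only [hF]
      rw [hperT y]
      congr 1
      rw [show -Complex.I * (l : ℂ) * ((nuF f : ℕ) : ℂ) * ((y + 2 * π / (nuF f : ℝ) : ℝ) : ℂ)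
          = -Complex.I * (l : ℂ) * ((nuF f : ℕ) : ℂ) * (y : ℂ)
            + ((-l : ℤ) : ℂ) * (2 * (π : ℂ) * Complex.I) by
        push_cast
        field_simp
        ring]
      rw [Complex.exp_add, Complex.exp_int_mul_two_pi_mul_I, mul_one]
    have hFint : ∀ a b : ℝ, IntervalIntegrable F volume a b :=
      fun a b => hintc (-Complex.I * (l : ℂ) * ((nuF f : ℕ) : ℂ)) a b
    have hsub : (∫ x in (-π : ℝ)..π,
        ((f (x / (nuF f : ℝ)) : ℝ) : ℂ) * Complex.exp (-Complex.I * (l : ℂ) * (x : ℂ)))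
        = (nuF f : ℝ) • ∫ y in (-π / (nuF f : ℝ))..(π / (nuF f : ℝ)), F y := by
      rw [← intervalIntegral.integral_comp_div F hνR]
      apply intervalIntegral.integral_congr
      intro x _
      simp only [hF]
      have harg : -Complex.I * (l : ℂ) * (x : ℂ)
          = -Complex.I * (l : ℂ) * ((nuF f : ℕ) : ℂ) * ((x / (nuF f : ℝ) : ℝ) : ℂ) := by
        push_cast
        field_simp
      rw [harg]
    have hper2 : (∫ y in (-π / (nuF f : ℝ))..(π / (nuF f : ℝ)), F y)
        = ∫ y in (-π : ℝ)..(-π + 2 * π / (nuF f : ℝ)), F y := by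
      have e2 := hFper.intervalIntegral_add_eq (-π / (nuF f : ℝ)) (-π)
      rw [show -π / (nuF f : ℝ) + 2 * π / (nuF f : ℝ) = π / (nuF f : ℝ) by ring] at e2
      exact e2
    have hzs : (∫ x in (-π : ℝ)..π, F x)
        = ((nuF f : ℕ) : ℤ) • ∫ y in (-π : ℝ)..(-π + 2 * π / (nuF f : ℝ)), F y := by
      have e3 := hFper.intervalIntegral_add_zsmul_eq ((nuF f : ℕ) : ℤ) (-π) hFint
      rw [show ((nuF f : ℕ) : ℤ) • (2 * π / (nuF f : ℝ)) = 2 * π by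
        rw [zsmul_eq_mul]; push_cast; field_simp] at e3
      rw [show (-π + 2 * π : ℝ) = π by ring] at e3
      exact e3
    have hRHS : (∫ x in (-π : ℝ)..π,
        (f x : ℂ) * Complex.exp (-Complex.I * ((l * (nuF f : ℤ) : ℤ) : ℂ) * (x : ℂ)))
        = ∫ x in (-π : ℝ)..π, F x := by
      apply intervalIntegral.integral_congr
      intro x _
      simp only [hF]
      congr 2
      push_cast
      ring
    simp only [fc]
    rw [hsub, hper2, hRHS, hzs]
    rw [Complex.real_smul, zsmul_eq_mul]
    push_cast
    ring
  -- conjugation symmetry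
  have cint : ∀ (g : ℝ → ℂ) (a b : ℝ),
      (starRingEnd ℂ) (∫ x in a..b, g x) = ∫ x in a..b, (starRingEnd ℂ) (g x) := by
    intro g a b
    simp only [intervalIntegral, map_sub]
    rw [← integral_conj, ← integral_conj]
  have hconj : ∀ k : ℤ, fc f (-k) = (starRingEnd ℂ) (fc f k) := by
    intro k
    unfold fc
    rw [map_mul, cint]
    congr 1
    · have h2pi : ((2 * (π : ℝ) : ℝ) : ℂ) = 2 * (π : ℂ) := by push_cast; ring
      rw [← h2pi, map_div₀, map_one, Complex.conj_ofReal]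
    · apply intervalIntegral.integral_congr
      intro x _
      simp only [map_mul, ← Complex.exp_conj, Complex.conj_ofReal, map_neg, Complex.conj_I,
        map_intCast]
      congr 2
      push_cast
      ring
  -- boundedness of the repl set
  have hrbdd : BddAbove {r : ℝ | ∀ x : ℝ, f ((x + 2 * π) / r) = f (x / r)} := by
    refine ⟨(k0.natAbs : ℝ), fun r hr => ?_⟩
    have habs : |(k0 : ℝ)| = (k0.natAbs : ℝ) := by
      rw [Nat.cast_natAbs, Int.cast_abs]
    rcases le_or_gt r 0 with h0 | h0
    · have h1 : (1 : ℝ) ≤ (k0.natAbs : ℝ) := by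
        exact_mod_cast Nat.one_le_iff_ne_zero.mpr (Int.natAbs_ne_zero.mpr hk0ne)
      linarith
    · have hperr : ∀ y : ℝ, f (y + 2 * π / r) = f y := by
        intro y
        have h3 := hr (r * y)
        rw [show (r * y + 2 * π) / r = y + 2 * π / r by field_simp,
          show (r * y) / r = y by field_simp] at h3
        exact h3
      have hsh := fc_shift f hf.1 k0 (2 * π / r) hperr
      have hexp : Complex.exp (Complex.I * (k0 : ℂ) * ((2 * π / r : ℝ) : ℂ)) = 1 := by
        rcases mul_left_eq_self₀.mp hsh.symm with h | h
        · exact h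
        · exact absurd h hk0
      obtain ⟨n, hn⟩ := Complex.exp_eq_one_iff.mp hexp
      have h1 : Complex.I * ((k0 : ℂ) * ((2 * π / r : ℝ) : ℂ))
          = Complex.I * ((n : ℂ) * (2 * (π : ℂ))) := by linear_combination hn
      have h2 := mul_left_cancel₀ Complex.I_ne_zero h1
      have hreal : (k0 : ℝ) * (2 * π / r) = (n : ℝ) * (2 * π) := by
        have h3 : (((k0 : ℝ) * (2 * π / r) : ℝ) : ℂ) = (((n : ℝ) * (2 * π) : ℝ) : ℂ) := by
          push_cast at h2 ⊢
          linear_combination h2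
        exact_mod_cast h3
      have hn0 : n ≠ 0 := by
        rintro rfl
        have h4 : (k0 : ℝ) * (2 * π / r) ≠ 0 :=
          mul_ne_zero (Int.cast_ne_zero.mpr hk0ne) (by positivity)
        apply h4
        rw [hreal]
        simp
      have hk0r : (k0 : ℝ) * (2 * π) = (n : ℝ) * r * (2 * π) := by
        have h5 : (k0 : ℝ) * (2 * π / r) * r = (n : ℝ) * (2 * π) * r := by rw [hreal]
        rw [show (k0 : ℝ) * (2 * π / r) * r = (k0 : ℝ) * (2 * π) * (r / r) by ring,
          div_self h0.ne', mul_one] at h5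
        linear_combination h5
      have hk0r' : (k0 : ℝ) = (n : ℝ) * r := mul_right_cancel₀ (by positivity) hk0r
      have hn1 : (1 : ℝ) ≤ |(n : ℝ)| := by
        have := Int.one_le_abs hn0
        calc (1 : ℝ) ≤ ((|n| : ℤ) : ℝ) := by exact_mod_cast this
          _ = |(n : ℝ)| := by push_cast; ring
      have h6 : r ≤ |(k0 : ℝ)| := by
        rw [hk0r', abs_mul, abs_of_pos h0]
        nlinarith
      rw [habs] at h6
      exact h6
  have part7 : (nuF f : ℝ) ≤ repl f := by
    unfold repl
    exact le_csSup hrbdd part5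
  -- setwise coprimality
  have part8 : ∀ e : ℕ,
      (∀ k : ℕ, 0 < k → fc (fun x => f (x / (nuF f : ℝ))) (k : ℤ) ≠ 0 → e ∣ k) → e = 1 := by
    intro e he
    have hposj : ∀ j : ℤ, 0 < j → fc f ((nuF f : ℤ) * j) ≠ 0 → (e : ℤ) ∣ j := by
      intro j hj hne
      have hjt : ((j.toNat : ℤ)) = j := Int.toNat_of_nonneg hj.le
      have ha : fc (fun x => f (x / (nuF f : ℝ))) ((j.toNat : ℕ) : ℤ) ≠ 0 := by
        rw [part6, hjt, mul_comm]
        exact hne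
      have hb := he j.toNat (by omega) ha
      have hc := Int.natCast_dvd_natCast.mpr hb
      rwa [hjt] at hc
    have hallj : ∀ j : ℤ, j ≠ 0 → fc f ((nuF f : ℤ) * j) ≠ 0 → (e : ℤ) ∣ j := by
      intro j hj hne
      rcases lt_or_gt_of_ne hj with hneg | hposs
      · have hne' : fc f ((nuF f : ℤ) * (-j)) ≠ 0 := by
          rw [show (nuF f : ℤ) * (-j) = -((nuF f : ℤ) * j) by ring, hconj]
          simpa using hne
        exact (dvd_neg).mp (hposj (-j) (by omega) hne')
      · exact hposj j hposs hne
    rcases Nat.lt_or_ge e 2 with h2e | h2e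
    · interval_cases e
      · exfalso
        apply hk0
        by_cases hdm : (nuF f : ℤ) ∣ k0
        · obtain ⟨j, rfl⟩ := hdm
          have hj : j ≠ 0 := by
            rintro rfl
            simp at hk0ne
          by_contra hne
          have h7 := hallj j hj hne
          have : j = 0 := by simpa using h7
          exact hj this
        · exact hdvd k0 hdm
      · rfl
    · exfalso
      have hmemS : e * nuF f ∈ {j : ℕ | 0 < j ∧ ∀ k : ℤ, ¬ ((j : ℤ) ∣ k) → fc f k = 0} := by
        refine ⟨Nat.mul_pos (by omega) hpos, fun k hk => ?_⟩
        by_contra hc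
        apply hk
        have hdk : (nuF f : ℤ) ∣ k := by
          by_contra hdk2
          exact hc (hdvd k hdk2)
        obtain ⟨j, rfl⟩ := hdk
        rcases eq_or_ne j 0 with rfl | hj0
        · simp
        · have hedvd := hallj j hj0 hc
          have := mul_dvd_mul_left (nuF f : ℤ) hedvd
          rw [show ((e * nuF f : ℕ) : ℤ) = (nuF f : ℤ) * (e : ℤ) by push_cast; ring]
          exact this
      have hle := le_csSup h2 hmemS
      have h8 : 2 * nuF f ≤ e * nuF f := Nat.mul_le_mul_right (nuF f) h2e
      have : nuF f = sSup {j : ℕ | 0 < j ∧ ∀ k : ℤ, ¬ ((j : ℤ) ∣ k) → fc f k = 0} := rfl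
      omega
  exact ⟨h1, h2, hpos, hdvd, part5, part6, part7, part8⟩
end
end
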